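/- arXiv:2212.05355 — 2 statements merged into one kernel-verified Lean document; each statement's English description precedes it below -/
import Mathlib

section
/- Let r ∈ R^p, δ ≥ 0, ε > 0, and define f_ε : R^p → R by f_ε(x) = 1 if |w| ≤ δ, f_ε(x) = (w+δ+ε)/ε if −δ−ε < w ≤ −δ, f_ε(x) = (δ+ε−w)/ε if δ < w ≤ δ+ε, and f_ε(x) = 0 otherwise, where w = max_{k ∈ [p]} (x^{(k)} − r^{(k)}). Then f_ε is Lipschitz, satisfies 0 ≤ f_ε ≤ 1, f_ε(x) ≥ 1{x ∈ A_{r,δ}}, and at every point of differentiability the ℓ1 norm of its gradient equals (1/ε)·(1{x ∈ A_{r−(δ+ε/2)·1, ε/2}} + 1{x ∈ A_{r+(δ+ε/2)·1, ε/2}}). -/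
open MeasureTheory ProbabilityTheory Real
open scoped Classical

noncomputable def stdGaussian (ι : Type*) [Fintype ι] : Measure (ι → ℝ) :=
  Measure.pi (fun _ => gaussianReal 0 1)

def slab {p : ℕ} (r : Fin p → ℝ) (δ : ℝ) : Set (Fin p → ℝ) :=
  {x | ∀ k, x k ≤ r k + δ} \ {x | ∀ k, x k ≤ r k - δ}

noncomputable def kdist {Ω : Type*} [MeasurableSpace Ω] (P : Measure Ω) {p : ℕ}
    (U V : Ω → Fin p → ℝ) : ℝ :=
  ⨆ r : Fin p → ℝ,
    |(P {ω | ∀ k, U ω k ≤ r k}).toReal - (P {ω | ∀ k, V ω k ≤ r k}).toReal|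

def IsCenteredGaussianLaw {Ω : Type*} [MeasurableSpace Ω] (P : Measure Ω)
    {ι : Type*} [Fintype ι] (Y : Ω → ι → ℝ) (S : Matrix ι ι ℝ) : Prop :=
  ∃ A : Matrix ι ι ℝ, S = A * A.transpose ∧
    Measure.map Y P = Measure.map (fun z => A.mulVec z) (stdGaussian ι)

noncomputable def covM {Ω : Type*} [MeasurableSpace Ω] (P : Measure Ω) {p : ℕ}
    (U V : Ω → Fin p → ℝ) : Matrix (Fin p) (Fin p) ℝ :=
  Matrix.of fun a b => ∫ ω, U ω a * V ω b ∂P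

noncomputable def Spre {Ω : Type*} {n p : ℕ} (X : Fin n → Ω → Fin p → ℝ) (i : ℕ) :
    Ω → Fin p → ℝ :=
  fun ω a => ∑ k ∈ Finset.univ.filter (fun k : Fin n => (k : ℕ) < i), X k ω a

noncomputable def Sblk {Ω : Type*} {n p : ℕ} (X : Fin n → Ω → Fin p → ℝ) (a b : ℕ) :
    Ω → Fin p → ℝ :=
  fun ω j => ∑ k ∈ Finset.univ.filter (fun k : Fin n => a ≤ (k : ℕ) ∧ (k : ℕ) ≤ b), X k ω j

def Gpast {Ω : Type*} [MeasurableSpace Ω] {n p : ℕ} (X : Fin n → Ω → Fin p → ℝ) (i : ℕ) :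
    MeasurableSpace Ω :=
  ⨆ k : Fin n, ⨆ _ : i ≤ (k : ℕ), MeasurableSpace.comap (X k) inferInstance

def CondACBound {Ω : Type*} [MeasurableSpace Ω] {n p : ℕ} (P : Measure Ω)
    (X : Fin n → Ω → Fin p → ℝ) (i : ℕ) (δ K : ℝ) : Prop :=
  ∀ r : Ω → Fin p → ℝ, Measurable[Gpast X i] r →
    ∀ᵐ ω ∂P,
      (P[Set.indicator {ω' | Spre X i ω' ∈ slab (r ω') δ} (fun _ => (1:ℝ)) | Gpast X i]) ω ≤ K

noncomputable def wfun {p : ℕ} (r x : Fin p → ℝ) : ℝ := ⨆ k, (x k - r k)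

noncomputable def fcut {p : ℕ} (r : Fin p → ℝ) (δ ε : ℝ) (x : Fin p → ℝ) : ℝ :=
  if |wfun r x| ≤ δ then 1
  else if -δ - ε < wfun r x ∧ wfun r x ≤ -δ then (wfun r x + δ + ε) / ε
  else if δ < wfun r x ∧ wfun r x ≤ δ + ε then (δ + ε - wfun r x) / ε
  else 0

section aux
variable {p : ℕ}

lemma bdd (f : Fin p → ℝ) : BddAbove (Set.range f) := (Set.finite_range f).bddAbove

lemma wfun_le {r x : Fin p → ℝ} {c : ℝ} [Nonempty (Fin p)] (h : ∀ k, x k - r k ≤ c) :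
    wfun r x ≤ c := ciSup_le h

lemma le_wfun (r x : Fin p → ℝ) (k : Fin p) : x k - r k ≤ wfun r x :=
  le_ciSup (bdd fun k => x k - r k) k

lemma wfun_le_iff [Nonempty (Fin p)] (r x : Fin p → ℝ) (c : ℝ) :
    wfun r x ≤ c ↔ ∀ k, x k ≤ r k + c := by
  constructor
  · intro h k; have := le_trans (le_wfun r x k) h; linarith
  · intro h; exact wfun_le fun k => by have := h k; linarith

lemma mem_slab_iff [Nonempty (Fin p)] (r x : Fin p → ℝ) (c : ℝ) :
    x ∈ slab r c ↔ -c < wfun r x ∧ wfun r x ≤ c := by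
  simp only [slab, Set.mem_diff, Set.mem_setOf_eq]
  have h2 : (∀ k, x k ≤ r k - c) ↔ wfun r x ≤ -c := by
    rw [wfun_le_iff]; constructor <;> intro h k <;> have := h k <;> linarith
  rw [← wfun_le_iff, h2, not_le]
  tauto

lemma ciSup_add_const [Nonempty (Fin p)] (f : Fin p → ℝ) (c : ℝ) :
    (⨆ k, (f k + c)) = (⨆ k, f k) + c := by
  apply le_antisymm
  · exact ciSup_le fun k => by have := le_ciSup (bdd f) k; linarith
  · have h : ∀ k, f k ≤ (⨆ k, (f k + c)) - c := fun k => by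
      have := le_ciSup (bdd fun k => f k + c) k; linarith
    have := ciSup_le h; linarith

lemma wfun_eq [Nonempty (Fin p)] (r x : Fin p → ℝ) (t : ℝ) :
    wfun r (fun k => x k + t) = wfun r x + t := by
  unfold wfun
  have h : (fun k => x k + t - r k) = fun k => (x k - r k) + t := by funext k; ring
  rw [h, ciSup_add_const]

lemma wfun_shift [Nonempty (Fin p)] (r x : Fin p → ℝ) (c : ℝ) :
    wfun (fun k => r k + c) x = wfun r x - c := by
  unfold wfun
  have h : (fun k => x k - (r k + c)) = fun k => (x k - r k) + (-c) := by funext k; ring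
  rw [h, ciSup_add_const]; ring

lemma wfun_mono (r : Fin p → ℝ) : Monotone (wfun r) := fun a b hab =>
  ciSup_mono (bdd _) fun k => sub_le_sub_right (hab k) _

lemma wfun_sub_le [Nonempty (Fin p)] (r x y : Fin p → ℝ) : wfun r x - wfun r y ≤ dist x y := by
  rw [sub_le_iff_le_add]
  apply wfun_le
  intro k
  have h1 : y k - r k ≤ wfun r y := le_wfun r y k
  have h2 : x k - y k ≤ dist x y := by
    have h := dist_le_pi_dist x y k
    rw [Real.dist_eq] at h
    calc x k - y k ≤ |x k - y k| := le_abs_self _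
    _ ≤ dist x y := h
  linarith

lemma wfun_lipschitz [Nonempty (Fin p)] (r : Fin p → ℝ) : LipschitzWith 1 (wfun r) := by
  apply LipschitzWith.of_dist_le_mul
  intro x y
  rw [Real.dist_eq, NNReal.coe_one, one_mul, abs_sub_le_iff]
  exact ⟨wfun_sub_le r x y, by rw [dist_comm]; exact wfun_sub_le r y x⟩

end aux
section fcutlemmas
variable {p : ℕ} {r x : Fin p → ℝ} {δ ε : ℝ}

lemma fcut_eq_one (h : |wfun r x| ≤ δ) : fcut r δ ε x = 1 := by simp [fcut, h]

lemma fcut_eq_left (hδ : 0 ≤ δ) (hε : 0 < ε) (h1 : -δ - ε < wfun r x) (h2 : wfun r x ≤ -δ) :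
    fcut r δ ε x = (wfun r x + δ + ε) / ε := by
  unfold fcut
  by_cases h : |wfun r x| ≤ δ
  · have hw : wfun r x = -δ := le_antisymm h2 (abs_le.mp h).1
    rw [if_pos h, hw]
    field_simp
    ring
  · rw [if_neg h, if_pos ⟨h1, h2⟩]

lemma fcut_eq_right (hδ : 0 ≤ δ) (hε : 0 < ε) (h1 : δ < wfun r x) (h2 : wfun r x ≤ δ + ε) :
    fcut r δ ε x = (δ + ε - wfun r x) / ε := by
  unfold fcut
  rw [if_neg (by rw [abs_le]; push_neg; intro h; linarith),
    if_neg (by push_neg; intro h; linarith), if_pos ⟨h1, h2⟩]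

lemma fcut_eq_zero_left (hδ : 0 ≤ δ) (hε : 0 < ε) (h : wfun r x ≤ -δ - ε) :
    fcut r δ ε x = 0 := by
  unfold fcut
  rw [if_neg (by rw [abs_le]; push_neg; intro h'; linarith),
    if_neg (by push_neg; intro h'; linarith), if_neg (by push_neg; intro h'; linarith)]

lemma fcut_eq_zero_right (hδ : 0 ≤ δ) (hε : 0 < ε) (h : δ + ε ≤ wfun r x) :
    fcut r δ ε x = 0 := by
  rcases eq_or_lt_of_le h with h' | h'
  · rw [fcut_eq_right hδ hε (by linarith) (by linarith), ← h']
    field_simp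
    ring
  · unfold fcut
    rw [if_neg (by rw [abs_le]; push_neg; intro h''; linarith),
      if_neg (by push_neg; intro h''; linarith), if_neg (by push_neg; intro h''; linarith)]

lemma fcut_closed (hδ : 0 ≤ δ) (hε : 0 < ε) :
    fcut r δ ε x = max 0 (min 1 ((δ + ε - |wfun r x|) / ε)) := by
  set w := wfun r x with hw
  rcases le_or_gt w (-δ - ε) with h | h
  · rw [fcut_eq_zero_left hδ hε h]
    have habs : δ + ε ≤ |w| := by rw [abs_of_nonpos (by linarith)]; linarith
    have ha : (δ + ε - |w|) / ε ≤ 0 := div_nonpos_iff.mpr (Or.inr ⟨by linarith, hε.le⟩)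
    rw [min_eq_right (le_trans ha zero_le_one), max_eq_left ha]
  · rcases le_or_gt w (-δ) with h2 | h2
    · rw [fcut_eq_left hδ hε h h2]
      have hw0 : w ≤ 0 := by linarith
      rw [abs_of_nonpos hw0]
      rw [min_eq_right (by rw [div_le_one hε]; linarith),
        max_eq_right (div_nonneg (by linarith) hε.le)]
      ring_nf
      rw [← hw]; ring
    · rcases le_or_gt w δ with h3 | h3
      · rw [fcut_eq_one (abs_le.mpr ⟨by linarith, h3⟩)]
        have habs : |w| ≤ δ := abs_le.mpr ⟨by linarith, h3⟩
        rw [min_eq_left (by rw [le_div_iff₀ hε]; linarith), max_eq_right zero_le_one]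
      · rcases le_or_gt w (δ + ε) with h4 | h4
        · rw [fcut_eq_right hδ hε h3 h4, abs_of_nonneg (by linarith)]
          rw [min_eq_right (by rw [div_le_one hε]; linarith),
            max_eq_right (div_nonneg (by linarith) hε.le)]
        · rw [fcut_eq_zero_right hδ hε h4.le, abs_of_nonneg (by linarith)]
          have ha : (δ + ε - w) / ε ≤ 0 := div_nonpos_iff.mpr (Or.inr ⟨by linarith, hε.le⟩)
          rw [min_eq_right (le_trans ha zero_le_one), max_eq_left ha]

lemma fcut_lipschitz [Nonempty (Fin p)] (hδ : 0 ≤ δ) (hε : 0 < ε) :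
    LipschitzWith ⟨1 / ε, by positivity⟩ (fcut r δ ε (p := p)) := by
  apply LipschitzWith.of_dist_le_mul
  intro x y
  rw [Real.dist_eq, fcut_closed hδ hε, fcut_closed hδ hε]
  set a := (δ + ε - |wfun r x|) / ε with hadef
  set b := (δ + ε - |wfun r y|) / ε with hbdef
  have key : |a - b| ≤ (1 / ε) * dist x y := by
    have hab : a - b = (|wfun r y| - |wfun r x|) / ε := by
      rw [hadef, hbdef]; field_simp; ring
    rw [hab, abs_div, abs_of_pos hε, one_div, inv_mul_eq_div]
    have hb1 : |wfun r y - wfun r x| ≤ dist x y := abs_sub_le_iff.mpr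
        ⟨by rw [dist_comm]; exact wfun_sub_le r y x, wfun_sub_le r x y⟩
    have hb2 := le_trans (abs_abs_sub_abs_le_abs_sub (wfun r y) (wfun r x)) hb1
    gcongr
  have hclamp : |max 0 (min 1 a) - max 0 (min 1 b)| ≤ |a - b| := by
    rw [max_comm 0 (min 1 a), max_comm 0 (min 1 b)]
    calc |max (min 1 a) 0 - max (min 1 b) 0| ≤ |min 1 a - min 1 b| :=
        abs_max_sub_max_le_abs _ _ _
    _ ≤ max |(1:ℝ) - 1| |a - b| := abs_min_sub_min_le_max _ _ _ _
    _ = |a - b| := by rw [sub_self, abs_zero]; exact max_eq_right (abs_nonneg _)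
  calc |max 0 (min 1 a) - max 0 (min 1 b)| ≤ |a - b| := hclamp
  _ ≤ (1 / ε) * dist x y := key
  _ = ((⟨1 / ε, by positivity⟩ : NNReal) : ℝ) * dist x y := by norm_num

end fcutlemmas
section calc1
variable {p : ℕ}

lemma dirDeriv {f : (Fin p → ℝ) → ℝ} {x : Fin p → ℝ} (hd : DifferentiableAt ℝ f x)
    (v : Fin p → ℝ) :
    HasDerivAt (fun t : ℝ => f (x + t • v)) (fderiv ℝ f x v) 0 := by
  have h1 : HasDerivAt (fun t : ℝ => x + t • v) v 0 := by
    simpa using ((hasDerivAt_id (0 : ℝ)).smul_const v).const_add x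
  have h2 : HasFDerivAt f (fderiv ℝ f x) ((fun t : ℝ => x + t • v) 0) := by
    simpa using hd.hasFDerivAt
  exact h2.comp_hasDerivAt 0 h1

lemma sum_abs_fderiv_wfun [Nonempty (Fin p)] {r x : Fin p → ℝ}
    (hd : DifferentiableAt ℝ (wfun r) x) :
    ∑ k, |fderiv ℝ (wfun r) x (Pi.single k 1)| = 1 := by
  set D := fderiv ℝ (wfun r) x with hD
  have hone : D (fun _ => 1) = 1 := by
    have h1 := dirDeriv hd (fun _ => (1 : ℝ))
    have h2 : (fun t : ℝ => wfun r (x + t • (fun _ => (1 : ℝ)))) = fun t => wfun r x + t := by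
      funext t
      rw [show x + t • (fun _ => (1 : ℝ)) = fun k => x k + t from by funext k; simp]
      exact wfun_eq r x t
    rw [h2] at h1
    exact h1.unique ((hasDerivAt_id (0 : ℝ)).const_add (wfun r x))
  have hnn : ∀ k, 0 ≤ D (Pi.single k 1) := by
    intro k
    set e : Fin p → ℝ := Pi.single k (1 : ℝ) with he
    have hψ := dirDeriv hd e
    have hmono : Monotone (fun t : ℝ => wfun r (x + t • e)) := by
      intro s t hst
      apply wfun_mono
      intro j
      simp only [Pi.add_apply, Pi.smul_apply, smul_eq_mul]
      have hnn' : (0 : ℝ) ≤ e j := by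
        by_cases h : j = k <;> simp [he, Pi.single_apply, h]
      nlinarith [mul_le_mul_of_nonneg_right hst hnn']
    have htend := hasDerivAt_iff_tendsto_slope.mp hψ
    have h2 : Filter.Tendsto (slope (fun t : ℝ => wfun r (x + t • e)) 0)
        (nhdsWithin 0 (Set.Ioi 0)) (nhds (D e)) :=
      htend.mono_left (nhdsWithin_mono 0 (fun t ht => Set.mem_compl_singleton_iff.mpr
        (ne_of_gt ht)))
    apply ge_of_tendsto h2
    filter_upwards [self_mem_nhdsWithin] with t ht
    have h0 : (0 : ℝ) < t := ht
    have hm := hmono h0.le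
    rw [slope_def_field]
    have hsub : (0:ℝ) ≤ (wfun r (x + t • e) - wfun r (x + (0:ℝ) • e)) := sub_nonneg.mpr hm
    have ht0 : (0:ℝ) ≤ t - 0 := by linarith
    exact div_nonneg hsub ht0
  calc ∑ k, |D (Pi.single k 1)| = ∑ k, D (Pi.single k 1) :=
      Finset.sum_congr rfl fun k _ => abs_of_nonneg (hnn k)
  _ = D (∑ k, Pi.single k (1 : ℝ)) := (map_sum D _ _).symm
  _ = D (fun _ => 1) := by
      congr 1
      funext j
      simp [Finset.sum_apply, Finset.sum_pi_single]
  _ = 1 := hone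

lemma not_diff_corner {g : ℝ → ℝ} {m₁ m₂ η : ℝ} (hm : m₁ ≠ m₂) (hη : 0 < η)
    (h₁ : ∀ t : ℝ, -η < t → t ≤ 0 → g t = g 0 + m₁ * t)
    (h₂ : ∀ t : ℝ, 0 ≤ t → t < η → g t = g 0 + m₂ * t) :
    ¬ DifferentiableAt ℝ g 0 := by
  intro hd
  have hne : m₂ - m₁ ≠ 0 := sub_ne_zero.mpr fun h => hm h.symm
  have hev : (fun t : ℝ => |t|) =ᶠ[nhds (0 : ℝ)]
      fun t => (g t - g 0 - ((m₁ + m₂) / 2) * t) * (2 / (m₂ - m₁)) := by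
    filter_upwards [Ioo_mem_nhds (by linarith : -η < (0:ℝ)) hη] with t ht
    rcases le_total t 0 with h | h
    · rw [h₁ t ht.1 h, abs_of_nonpos h]; field_simp; ring
    · rw [h₂ t h ht.2, abs_of_nonneg h]; field_simp; ring
  have hda : DifferentiableAt ℝ (fun t : ℝ => |t|) 0 := by
    rw [hev.differentiableAt_iff]
    exact ((hd.sub_const (g 0)).sub ((differentiableAt_id).const_mul _)).mul_const _
  exact not_differentiableAt_abs_zero hda

end calc1

theorem stmt1 (p : ℕ) (hp : 0 < p) (r : Fin p → ℝ) (δ ε : ℝ) (hδ : 0 ≤ δ) (hε : 0 < ε) :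
    (∃ K : NNReal, LipschitzWith K (fcut r δ ε)) ∧
    (∀ x, 0 ≤ fcut r δ ε x ∧ fcut r δ ε x ≤ 1) ∧
    (∀ x, x ∈ slab r δ → 1 ≤ fcut r δ ε x) ∧
    (∀ x, DifferentiableAt ℝ (fcut r δ ε) x →
      ∑ k, |fderiv ℝ (fcut r δ ε) x (Pi.single k 1)| =
        (1 / ε) * ((if x ∈ slab (fun k => r k - (δ + ε / 2)) (ε / 2) then 1 else 0)
          + (if x ∈ slab (fun k => r k + (δ + ε / 2)) (ε / 2) then 1 else 0))) := by
  haveI : Nonempty (Fin p) := Fin.pos_iff_nonempty.mp hp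
  refine ⟨⟨⟨1 / ε, by positivity⟩, fcut_lipschitz hδ hε⟩, ?_, ?_, ?_⟩
  · intro x
    rw [fcut_closed hδ hε]
    exact ⟨le_max_left _ _, max_le zero_le_one (min_le_left _ _)⟩
  · intro x hx
    rw [mem_slab_iff] at hx
    rw [fcut_eq_one (abs_le.mpr ⟨hx.1.le, hx.2⟩)]
  · intro x hd
    set w := wfun r x with hwdef
    have hpos : (0:ℝ) < 1 / ε := by positivity
    have hcont : Continuous (wfun r) := (wfun_lipschitz r).continuous
    have hslab1 : (x ∈ slab (fun k => r k - (δ + ε / 2)) (ε / 2)) ↔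
        (-δ - ε < w ∧ w ≤ -δ) := by
      have hr : (fun k => r k - (δ + ε / 2)) = fun k => r k + (-(δ + ε / 2)) := by
        funext k; ring
      rw [hr, mem_slab_iff, wfun_shift, ← hwdef]
      constructor <;> rintro ⟨h1, h2⟩ <;> constructor <;> linarith
    have hslab2 : (x ∈ slab (fun k => r k + (δ + ε / 2)) (ε / 2)) ↔
        (δ < w ∧ w ≤ δ + ε) := by
      rw [mem_slab_iff, wfun_shift, ← hwdef]
      constructor <;> rintro ⟨h1, h2⟩ <;> constructor <;> linarith
    have hconst : ∀ c : ℝ, (fcut r δ ε =ᶠ[nhds x] fun _ => c) →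
        ∑ k, |fderiv ℝ (fcut r δ ε) x (Pi.single k 1)| = 0 := by
      intro c hev
      have h0 : fderiv ℝ (fcut r δ ε) x = 0 := by
        rw [hev.fderiv_eq]; exact fderiv_const_apply c
      simp [h0]
    have hlin : ∀ s c : ℝ, s ≠ 0 →
        ((fun y => s * fcut r δ ε y + c) =ᶠ[nhds x] wfun r) →
        ∑ k, |fderiv ℝ (fcut r δ ε) x (Pi.single k 1)| = 1 / |s| := by
      intro s c hs hev
      have hdw : DifferentiableAt ℝ (wfun r) x :=
        (hev.differentiableAt_iff).mp ((hd.const_mul s).add_const c)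
      have hfd : fderiv ℝ (wfun r) x = s • fderiv ℝ (fcut r δ ε) x := by
        rw [← hev.fderiv_eq, fderiv_add_const, fderiv_const_mul hd s]
      have hsum := sum_abs_fderiv_wfun hdw
      have hk : ∀ k : Fin p, |fderiv ℝ (fcut r δ ε) x (Pi.single k 1)| =
          (1 / |s|) * |fderiv ℝ (wfun r) x (Pi.single k 1)| := by
        intro k
        rw [hfd, ContinuousLinearMap.smul_apply, smul_eq_mul, abs_mul]
        have : |s| ≠ 0 := abs_ne_zero.mpr hs
        field_simp
      rw [Finset.sum_congr rfl (fun k _ => hk k), ← Finset.mul_sum, hsum, mul_one]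
    -- corner machinery
    have hφ : ∀ t : ℝ, wfun r (x + t • (fun _ => (1 : ℝ))) = w + t := by
      intro t
      rw [show x + t • (fun _ => (1 : ℝ)) = fun k => x k + t from by funext k; simp,
        wfun_eq, ← hwdef]
    have hdφ : DifferentiableAt ℝ (fun t : ℝ => fcut r δ ε (x + t • (fun _ => (1 : ℝ)))) 0 :=
      (dirDeriv hd (fun _ => (1 : ℝ))).differentiableAt
    have hvalL : ∀ t : ℝ, w + t ≤ -δ - ε →
        fcut r δ ε (x + t • (fun _ => (1 : ℝ))) = 0 :=
      fun t ht => fcut_eq_zero_left hδ hε (by rw [hφ]; exact ht)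
    have hvalml : ∀ t : ℝ, -δ - ε < w + t → w + t ≤ -δ →
        fcut r δ ε (x + t • (fun _ => (1 : ℝ))) = (w + t + δ + ε) / ε :=
      fun t h1 h2 => by
        rw [fcut_eq_left hδ hε (by rw [hφ]; exact h1) (by rw [hφ]; exact h2), hφ]
    have hval1 : ∀ t : ℝ, |w + t| ≤ δ →
        fcut r δ ε (x + t • (fun _ => (1 : ℝ))) = 1 :=
      fun t ht => fcut_eq_one (by rw [hφ]; exact ht)
    have hvalmr : ∀ t : ℝ, δ < w + t → w + t ≤ δ + ε →
        fcut r δ ε (x + t • (fun _ => (1 : ℝ))) = (δ + ε - (w + t)) / ε :=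
      fun t h1 h2 => by
        rw [fcut_eq_right hδ hε (by rw [hφ]; exact h1) (by rw [hφ]; exact h2), hφ]
    have hvalR : ∀ t : ℝ, δ + ε ≤ w + t →
        fcut r δ ε (x + t • (fun _ => (1 : ℝ))) = 0 :=
      fun t ht => fcut_eq_zero_right hδ hε (by rw [hφ]; exact ht)
    rcases lt_trichotomy w (-δ - ε) with hc | hc | hc
    · -- locally zero
      have hU : (wfun r) ⁻¹' (Set.Iio (-δ - ε)) ∈ nhds x :=
        (isOpen_Iio.preimage hcont).mem_nhds hc
      have hev : fcut r δ ε =ᶠ[nhds x] fun _ => (0 : ℝ) := by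
        filter_upwards [hU] with y hy
        exact fcut_eq_zero_left hδ hε (le_of_lt hy)
      have h1 : ¬ (x ∈ slab (fun k => r k - (δ + ε / 2)) (ε / 2)) := by
        rw [hslab1]; push_neg; intro h; linarith
      have h2 : ¬ (x ∈ slab (fun k => r k + (δ + ε / 2)) (ε / 2)) := by
        rw [hslab2]; push_neg; intro h; linarith
      rw [hconst 0 hev, if_neg h1, if_neg h2]; ring
    · -- corner at -δ-ε
      exfalso
      refine not_diff_corner (m₁ := 0) (m₂ := 1 / ε) (η := ε) hpos.ne hε ?_ ?_ hdφ
      · intro t h1 h2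
        show fcut r δ ε (x + t • (fun _ => (1 : ℝ))) =
          fcut r δ ε (x + (0:ℝ) • (fun _ => (1 : ℝ))) + 0 * t
        rw [hvalL t (by linarith), hvalL 0 (by linarith)]; ring
      · intro t h1 h2
        show fcut r δ ε (x + t • (fun _ => (1 : ℝ))) =
          fcut r δ ε (x + (0:ℝ) • (fun _ => (1 : ℝ))) + (1 / ε) * t
        rw [hvalL 0 (by linarith)]
        rcases eq_or_lt_of_le h1 with h0 | h0
        · rw [← h0, hvalL 0 (by linarith)]; ring
        · rw [hvalml t (by linarith) (by linarith), hc]; field_simp; ring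
    rcases lt_trichotomy w (-δ) with hc2 | hc2 | hc2
    · -- left linear region
      have hU : (wfun r) ⁻¹' (Set.Ioo (-δ - ε) (-δ)) ∈ nhds x :=
        (isOpen_Ioo.preimage hcont).mem_nhds ⟨hc, hc2⟩
      have hev : (fun y => ε * fcut r δ ε y + (-(δ + ε))) =ᶠ[nhds x] wfun r := by
        filter_upwards [hU] with y hy
        rw [fcut_eq_left hδ hε hy.1 hy.2.le]
        field_simp
        ring
      have h1 : x ∈ slab (fun k => r k - (δ + ε / 2)) (ε / 2) := hslab1.mpr ⟨hc, hc2.le⟩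
      have h2 : ¬ (x ∈ slab (fun k => r k + (δ + ε / 2)) (ε / 2)) := by
        rw [hslab2]; push_neg; intro h; linarith
      rw [hlin ε (-(δ + ε)) hε.ne' hev, if_pos h1, if_neg h2, abs_of_pos hε]; ring
    · -- corner at -δ
      exfalso
      rcases eq_or_lt_of_le hδ with hδ0 | hδ0
      · -- δ = 0 : slopes 1/ε and -1/ε
        have hδ' : δ = 0 := hδ0.symm
        have hw0 : w = 0 := by rw [hc2, hδ', neg_zero]
        have habs0 : |w + 0| ≤ δ := by rw [hw0, hδ']; simp
        refine not_diff_corner (m₁ := 1 / ε) (m₂ := -(1 / ε)) (η := ε)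
          (by intro h; linarith) hε ?_ ?_ hdφ
        · intro t h1 h2
          show fcut r δ ε (x + t • (fun _ => (1 : ℝ))) =
            fcut r δ ε (x + (0:ℝ) • (fun _ => (1 : ℝ))) + (1 / ε) * t
          rw [hvalml t (by rw [hw0, hδ']; linarith) (by rw [hw0, hδ']; linarith),
            hval1 0 habs0, hw0, hδ']
          field_simp
          ring
        · intro t h1 h2
          show fcut r δ ε (x + t • (fun _ => (1 : ℝ))) =
            fcut r δ ε (x + (0:ℝ) • (fun _ => (1 : ℝ))) + (-(1 / ε)) * t
          rw [hval1 0 habs0]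
          rcases eq_or_lt_of_le h1 with h0 | h0
          · rw [← h0, hval1 0 habs0]; ring
          · rw [hvalmr t (by rw [hw0, hδ']; linarith) (by rw [hw0, hδ']; linarith),
              hw0, hδ']
            field_simp
            ring
      · -- δ > 0 : slopes 1/ε and 0
        refine not_diff_corner (m₁ := 1 / ε) (m₂ := 0) (η := min ε δ)
          hpos.ne' (lt_min hε hδ0) ?_ ?_ hdφ
        · intro t h1 h2
          have hεt : -ε < t := lt_of_le_of_lt (neg_le_neg (min_le_left ε δ)) h1
          show fcut r δ ε (x + t • (fun _ => (1 : ℝ))) =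
            fcut r δ ε (x + (0:ℝ) • (fun _ => (1 : ℝ))) + (1 / ε) * t
          rw [hvalml t (by linarith) (by linarith),
            hval1 0 (by rw [add_zero, hc2, abs_of_nonpos (by linarith), neg_neg]),
            hc2]
          field_simp
          ring
        · intro t h1 h2
          have hδt : t < δ := lt_of_lt_of_le h2 (min_le_right ε δ)
          show fcut r δ ε (x + t • (fun _ => (1 : ℝ))) =
            fcut r δ ε (x + (0:ℝ) • (fun _ => (1 : ℝ))) + 0 * t
          rw [hval1 t (by rw [hc2, abs_le]; constructor <;> linarith),
            hval1 0 (by rw [add_zero, hc2, abs_of_nonpos (by linarith), neg_neg])]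
          ring
    rcases lt_trichotomy w δ with hc3 | hc3 | hc3
    · -- locally one
      have hU : (wfun r) ⁻¹' (Set.Ioo (-δ) δ) ∈ nhds x :=
        (isOpen_Ioo.preimage hcont).mem_nhds ⟨hc2, hc3⟩
      have hev : fcut r δ ε =ᶠ[nhds x] fun _ => (1 : ℝ) := by
        filter_upwards [hU] with y hy
        exact fcut_eq_one (abs_le.mpr ⟨hy.1.le, hy.2.le⟩)
      have h1 : ¬ (x ∈ slab (fun k => r k - (δ + ε / 2)) (ε / 2)) := by
        rw [hslab1]; push_neg; intro h; linarith
      have h2 : ¬ (x ∈ slab (fun k => r k + (δ + ε / 2)) (ε / 2)) := by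
        rw [hslab2]; push_neg; intro h; linarith
      rw [hconst 1 hev, if_neg h1, if_neg h2]; ring
    · -- corner at δ (here δ > 0 since -δ < w = δ)
      exfalso
      have hδ0 : 0 < δ := by linarith
      refine not_diff_corner (m₁ := 0) (m₂ := -(1 / ε)) (η := min ε δ)
        (by intro h; linarith) (lt_min hε hδ0) ?_ ?_ hdφ
      · intro t h1 h2
        have hδt : -δ < t := lt_of_le_of_lt (neg_le_neg (min_le_right ε δ)) h1
        show fcut r δ ε (x + t • (fun _ => (1 : ℝ))) =
          fcut r δ ε (x + (0:ℝ) • (fun _ => (1 : ℝ))) + 0 * t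
        rw [hval1 t (by rw [hc3, abs_le]; constructor <;> linarith),
          hval1 0 (by rw [add_zero, hc3, abs_of_nonneg (by linarith)])]
        ring
      · intro t h1 h2
        have hεt : t < ε := lt_of_lt_of_le h2 (min_le_left ε δ)
        show fcut r δ ε (x + t • (fun _ => (1 : ℝ))) =
          fcut r δ ε (x + (0:ℝ) • (fun _ => (1 : ℝ))) + (-(1 / ε)) * t
        rw [hval1 0 (by rw [add_zero, hc3, abs_of_nonneg (by linarith)])]
        rcases eq_or_lt_of_le h1 with h0 | h0
        · rw [← h0, hval1 0 (by rw [add_zero, hc3, abs_of_nonneg (by linarith)])]; ring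
        · rw [hvalmr t (by linarith) (by linarith), hc3]
          field_simp; ring
    rcases lt_trichotomy w (δ + ε) with hc4 | hc4 | hc4
    · -- right linear region
      have hU : (wfun r) ⁻¹' (Set.Ioo δ (δ + ε)) ∈ nhds x :=
        (isOpen_Ioo.preimage hcont).mem_nhds ⟨hc3, hc4⟩
      have hev : (fun y => -ε * fcut r δ ε y + (δ + ε)) =ᶠ[nhds x] wfun r := by
        filter_upwards [hU] with y hy
        rw [fcut_eq_right hδ hε hy.1 hy.2.le]
        field_simp
        ring
      have h1 : ¬ (x ∈ slab (fun k => r k - (δ + ε / 2)) (ε / 2)) := by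
        rw [hslab1]; push_neg; intro h; linarith
      have h2 : x ∈ slab (fun k => r k + (δ + ε / 2)) (ε / 2) := hslab2.mpr ⟨hc3, hc4.le⟩
      rw [hlin (-ε) (δ + ε) (by intro h; apply hε.ne'; linarith) hev, if_neg h1, if_pos h2,
        abs_neg, abs_of_pos hε]
      ring
    · -- corner at δ + ε
      exfalso
      refine not_diff_corner (m₁ := -(1 / ε)) (m₂ := 0) (η := ε)
        (by intro h; linarith) hε ?_ ?_ hdφ
      · intro t h1 h2
        show fcut r δ ε (x + t • (fun _ => (1 : ℝ))) =
          fcut r δ ε (x + (0:ℝ) • (fun _ => (1 : ℝ))) + (-(1 / ε)) * t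
        rw [hvalR 0 (by linarith)]
        rcases eq_or_lt_of_le h2 with h0 | h0
        · rw [h0, hvalR 0 (by linarith)]; ring
        · rw [hvalmr t (by linarith) (by linarith), hc4]; field_simp; ring
      · intro t h1 h2
        show fcut r δ ε (x + t • (fun _ => (1 : ℝ))) =
          fcut r δ ε (x + (0:ℝ) • (fun _ => (1 : ℝ))) + 0 * t
        rw [hvalR t (by linarith), hvalR 0 (by linarith)]; ring
    · -- locally zero (right)
      have hU : (wfun r) ⁻¹' (Set.Ioi (δ + ε)) ∈ nhds x :=
        (isOpen_Ioi.preimage hcont).mem_nhds hc4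
      have hev : fcut r δ ε =ᶠ[nhds x] fun _ => (0 : ℝ) := by
        filter_upwards [hU] with y hy
        exact fcut_eq_zero_right hδ hε (le_of_lt hy)
      have h1 : ¬ (x ∈ slab (fun k => r k - (δ + ε / 2)) (ε / 2)) := by
        rw [hslab1]; push_neg; intro h; linarith
      have h2 : ¬ (x ∈ slab (fun k => r k + (δ + ε / 2)) (ε / 2)) := by
        rw [hslab2]; push_neg; intro h; linarith
      rw [hconst 0 hev, if_neg h1, if_neg h2]; ring
end

section
/- Let φ_{r,ε}(x) = P[x + εZ ≤ r] with Z standard Gaussian in R^p. Then for all x ∈ R^p, ‖∇³φ_{r,ε}(x)‖_1 ≤ C·(log(ep))^{3/2}/ε³ for an absolute constant C > 0, where ‖∇³φ_{r,ε}(x)‖_1 denotes the sum of absolute values of all third-order partial derivatives. -/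
open MeasureTheory ProbabilityTheory Real
open scoped Classical

/-- `φ_{r,ε}(x) = P[x + εZ ≤ r]` for `Z` standard Gaussian in `ℝ^p`. -/
noncomputable def phi (p : ℕ) (r : Fin p → ℝ) (ε : ℝ) (x : Fin p → ℝ) : ℝ :=
  ((stdGaussian (Fin p)) {z | ∀ k, x k + ε * z k ≤ r k}).toReal


namespace S17
open Set
open scoped ContDiff

noncomputable def gg (u : ℝ) : ℝ := (Real.sqrt (2*Real.pi))⁻¹ * Real.exp (-u^2/2)

lemma gg_eq : gg = gaussianPDFReal 0 1 := by
  funext u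
  simp [gaussianPDFReal, gg]

lemma gg_nonneg (u : ℝ) : 0 ≤ gg u := by
  unfold gg; positivity

lemma integrable_gg : Integrable gg := by
  rw [gg_eq]; exact integrable_gaussianPDFReal 0 1

lemma integral_gg : ∫ u, gg u = 1 := by
  rw [gg_eq]; exact integral_gaussianPDFReal_eq_one 0 one_ne_zero

noncomputable def Phi (t : ℝ) : ℝ := ∫ u in Iic t, gg u

lemma continuous_gg : Continuous gg := by
  unfold gg; fun_prop

lemma Phi_nonneg (t : ℝ) : 0 ≤ Phi t :=
  setIntegral_nonneg measurableSet_Iic fun u _ => gg_nonneg u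

lemma Phi_le_one (t : ℝ) : Phi t ≤ 1 := by
  rw [← integral_gg]
  exact setIntegral_le_integral integrable_gg (Filter.Eventually.of_forall gg_nonneg)

lemma Phi_add_Ioi (t : ℝ) : Phi t + ∫ u in Ioi t, gg u = 1 := by
  rw [← integral_gg, ← Set.compl_Iic]
  exact integral_add_compl measurableSet_Iic integrable_gg

lemma one_sub_Phi (t : ℝ) : 1 - Phi t = ∫ u in Ioi t, gg u := by
  linarith [Phi_add_Ioi t]

lemma Phi_mono {s t : ℝ} (h : s ≤ t) : Phi s ≤ Phi t := by
  apply setIntegral_mono_set integrable_gg.integrableOn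
    (Filter.Eventually.of_forall gg_nonneg)
  exact Filter.Eventually.of_forall (Iic_subset_Iic.2 h)

lemma Phi_zero : Phi 0 = 1/2 := by
  have h1 : Phi 0 + ∫ u in Ioi (0:ℝ), gg u = 1 := Phi_add_Ioi 0
  have h2 : (∫ u in Ioi (0:ℝ), gg u) = Phi 0 := by
    have : (∫ u in Iic (0:ℝ), gg u) = ∫ u in Ioi (-(0:ℝ)), gg u := by
      rw [← integral_comp_neg_Iic]
      congr 1; funext u; unfold gg; ring_nf
    unfold Phi; rw [this]; norm_num
  linarith

lemma Phi_half {t : ℝ} (ht : t ≤ 0) : 1 - Phi t ≥ 1/2 := by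
  have := Phi_mono ht
  rw [Phi_zero] at this; linarith

lemma hasDerivAt_Phi (t : ℝ) : HasDerivAt Phi (gg t) t := by
  have key : ∀ s : ℝ, Phi s = Phi 0 + ∫ u in (0:ℝ)..s, gg u := by
    intro s
    have := intervalIntegral.integral_Iic_sub_Iic (μ := volume) (f := gg)
      integrable_gg.integrableOn integrable_gg.integrableOn (a := 0) (b := s)
    unfold Phi; linarith
  have h : HasDerivAt (fun s => Phi 0 + ∫ u in (0:ℝ)..s, gg u) (gg t) t := by
    apply HasDerivAt.const_add
    exact intervalIntegral.integral_hasDerivAt_right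
      (integrable_gg.intervalIntegrable)
      continuous_gg.aestronglyMeasurable.stronglyMeasurableAtFilter
      continuous_gg.continuousAt
  exact h.congr_of_eventuallyEq (Filter.Eventually.of_forall key)

lemma exp_3half_le : Real.exp (3/2) ≤ 5 := by
  have h := Real.exp_one_lt_d9
  have h3 : Real.exp 3 < 25 := by
    have : Real.exp 3 = Real.exp 1 * Real.exp 1 * Real.exp 1 := by
      rw [← Real.exp_add, ← Real.exp_add]; norm_num
    rw [this]; nlinarith [Real.exp_pos 1]
  have hsq : Real.exp (3/2) * Real.exp (3/2) = Real.exp 3 := by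
    rw [← Real.exp_add]; norm_num
  nlinarith [Real.exp_pos (3/2 : ℝ)]

lemma mills {u : ℝ} (hu : 0 ≤ u) : gg u ≤ 5 * (1+u) * (1 - Phi u) := by
  set δ : ℝ := 1/(1+u) with hδ
  have h1u : (0:ℝ) < 1 + u := by linarith
  have hδpos : 0 < δ := by positivity
  have hδ1 : δ ≤ 1 := by rw [hδ]; rw [div_le_one h1u]; linarith
  set w : ℝ := u + δ with hw
  have huw : u ≤ w := by simp [hw]; linarith
  -- gaussian decreasing on [u, w]
  have hdec : ∀ x ∈ Icc u w, gg w ≤ gg x := by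
    intro x hx
    unfold gg
    apply mul_le_mul_of_nonneg_left _ (by positivity)
    apply Real.exp_le_exp.2
    have hxw : x ≤ w := hx.2
    have hx0 : 0 ≤ x := le_trans hu hx.1
    nlinarith
  have step1 : (∫ x in Ioc u w, gg x) ≤ 1 - Phi u := by
    rw [one_sub_Phi]
    apply setIntegral_mono_set integrable_gg.integrableOn
      (Filter.Eventually.of_forall gg_nonneg)
    exact Filter.Eventually.of_forall Ioc_subset_Ioi_self
  have step2 : δ * gg w ≤ ∫ x in Ioc u w, gg x := by
    have : (∫ x in Ioc u w, gg x) = ∫ x in u..w, gg x := by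
      rw [intervalIntegral.integral_of_le huw]
    rw [this]
    have hconst : (∫ _x in u..w, gg w) = δ * gg w := by
      rw [intervalIntegral.integral_const]
      simp [hw]
    rw [← hconst]
    apply intervalIntegral.integral_mono_on huw (by simp) integrable_gg.intervalIntegrable
    exact hdec
  have step3 : Real.exp (-(3:ℝ)/2) * gg u ≤ gg w := by
    unfold gg
    rw [mul_comm (Real.exp (-(3:ℝ)/2)) _, mul_assoc]
    apply mul_le_mul_of_nonneg_left _ (by positivity)
    rw [← Real.exp_add]
    apply Real.exp_le_exp.2
    have huδ : u * δ ≤ 1 := by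
      rw [hδ]; rw [mul_one_div, div_le_one h1u]; linarith
    have : w^2 = u^2 + 2*(u*δ) + δ^2 := by rw [hw]; ring
    nlinarith [sq_nonneg δ]
  -- combine
  have key : Real.exp (-(3:ℝ)/2) * gg u * δ ≤ 1 - Phi u := by
    calc Real.exp (-(3:ℝ)/2) * gg u * δ = δ * (Real.exp (-(3:ℝ)/2) * gg u) := by ring
    _ ≤ δ * gg w := by apply mul_le_mul_of_nonneg_left step3 hδpos.le
    _ ≤ 1 - Phi u := le_trans step2 step1
  have hexp : Real.exp (-(3:ℝ)/2) = (Real.exp (3/2))⁻¹ := by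
    rw [← Real.exp_neg]; norm_num
  have h5 : (5:ℝ)⁻¹ ≤ Real.exp (-(3:ℝ)/2) := by
    rw [hexp]
    apply inv_anti₀ (Real.exp_pos _) exp_3half_le
  have hgg := gg_nonneg u
  have : (5:ℝ)⁻¹ * gg u * δ ≤ 1 - Phi u := by
    refine le_trans ?_ key
    apply mul_le_mul_of_nonneg_right _ hδpos.le
    apply mul_le_mul_of_nonneg_right h5 hgg
  rw [hδ, one_div] at this
  have h2 := mul_le_mul_of_nonneg_right this (by positivity : (0:ℝ) ≤ 5*(1+u))
  have h3 : 5⁻¹ * gg u * (1+u)⁻¹ * (5*(1+u)) = gg u := by field_simp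
  rw [h3] at h2
  calc gg u ≤ (1 - Phi u) * (5 * (1+u)) := h2
  _ = 5 * (1+u) * (1 - Phi u) := by ring

noncomputable def D : ℕ → ℝ → ℝ
  | 0 => Phi
  | 1 => gg
  | 2 => fun u => -u * gg u
  | 3 => fun u => (u^2 - 1) * gg u
  | _ => fun _ => 0

lemma contDiff_gg : ContDiff ℝ ∞ gg := by
  have h : ContDiff ℝ ∞ (fun u : ℝ => -u^2/2) := (contDiff_id.pow 2).neg.div_const 2
  exact contDiff_const.mul (Real.contDiff_exp.comp h)

lemma hasDerivAt_gg (u : ℝ) : HasDerivAt gg (-u * gg u) u := by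
  have h1 : HasDerivAt (fun v : ℝ => -v^2/2) (-u) u := by
    have := ((hasDerivAt_pow 2 u).neg).div_const 2
    refine this.congr_deriv ?_
    simp; ring
  have h2 := (h1.exp).const_mul ((Real.sqrt (2*Real.pi))⁻¹)
  refine h2.congr_deriv ?_
  unfold gg; ring

lemma hasDerivAt_D2 (u : ℝ) : HasDerivAt (fun v => -v * gg v) ((u^2-1) * gg u) u := by
  have h := ((hasDerivAt_id u).neg).mul (hasDerivAt_gg u)
  refine h.congr_deriv ?_
  simp; ring

lemma hasDerivAt_D (j : ℕ) (hj : j ≤ 2) (t : ℝ) : HasDerivAt (D j) (D (j+1) t) t := by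
  interval_cases j
  · exact hasDerivAt_Phi t
  · exact hasDerivAt_gg t
  · exact hasDerivAt_D2 t

lemma contDiff_D (j : ℕ) : ContDiff ℝ ∞ (D j) := by
  match j with
  | 0 =>
    rw [show D 0 = Phi from rfl, contDiff_infty_iff_deriv]
    constructor
    · exact fun t => (hasDerivAt_Phi t).differentiableAt
    · have : deriv Phi = gg := funext fun t => (hasDerivAt_Phi t).deriv
      rw [this]; exact contDiff_gg
  | 1 => exact contDiff_gg
  | 2 => exact (contDiff_id.neg.mul contDiff_gg)
  | 3 => exact (((contDiff_id.pow 2).sub contDiff_const).mul contDiff_gg)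
  | (n+4) => exact contDiff_const

lemma abs_D_le (m : ℕ) (hm1 : 1 ≤ m) (hm3 : m ≤ 3) (u : ℝ) :
    |D m u| ≤ (1+|u|)^(m-1) * gg u := by
  interval_cases m
  · simp [D, abs_of_nonneg (gg_nonneg u)]
  · show |(-u * gg u)| ≤ (1+|u|)^1 * gg u
    rw [abs_mul, abs_neg, abs_of_nonneg (gg_nonneg u)]
    apply mul_le_mul_of_nonneg_right _ (gg_nonneg u)
    rw [pow_one]; linarith [abs_nonneg u]
  · show |((u^2-1) * gg u)| ≤ (1+|u|)^2 * gg u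
    rw [abs_mul, abs_of_nonneg (gg_nonneg u)]
    apply mul_le_mul_of_nonneg_right _ (gg_nonneg u)
    have h1 : |u^2 - 1| ≤ u^2 + 1 := by
      rw [abs_le]; constructor <;> nlinarith [sq_nonneg u]
    have h2 : u^2 + 1 ≤ (1+|u|)^2 := by nlinarith [abs_nonneg u, sq_abs u]
    linarith

lemma sqrt_two_pi_ge : (5:ℝ)/2 ≤ Real.sqrt (2*Real.pi) := by
  have h : (6.25:ℝ) ≤ 2*Real.pi := by nlinarith [Real.pi_gt_d6]
  have := Real.sqrt_le_sqrt h
  have h2 : Real.sqrt 6.25 = 2.5 := by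
    rw [show (6.25:ℝ) = 2.5^2 by norm_num]
    exact Real.sqrt_sq (by norm_num)
  rw [h2] at this; linarith

lemma gg_sq_bound (u : ℝ) : (1+|u|)^2 * gg u ≤ 5 := by
  set t := |u| with ht
  have ht0 : 0 ≤ t := abs_nonneg u
  have hexp : Real.exp (-u^2/2) ≤ (1 + t^2/2)⁻¹ := by
    have h1 : 1 + t^2/2 ≤ Real.exp (t^2/2) := by
      have := Real.add_one_le_exp (t^2/2); linarith
    have h3 : -u^2/2 = -(t^2/2) := by rw [ht, sq_abs]; ring
    rw [h3, Real.exp_neg]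
    exact inv_anti₀ (by positivity) h1
  unfold gg
  have h1 : (1+t)^2 * ((Real.sqrt (2*Real.pi))⁻¹ * Real.exp (-u^2/2))
      ≤ (1+t)^2 * ((5/2:ℝ)⁻¹ * (1 + t^2/2)⁻¹) := by
    apply mul_le_mul_of_nonneg_left _ (by positivity)
    apply mul_le_mul _ hexp (Real.exp_pos _).le (by positivity)
    apply inv_anti₀ (by norm_num) sqrt_two_pi_ge
  refine le_trans h1 ?_
  rw [show ((5/2:ℝ))⁻¹ = 2/5 by norm_num]
  have hpos : (0:ℝ) < 1 + t^2/2 := by positivity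
  have heq : (1+t)^2 * (2/5 * (1 + t^2/2)⁻¹) = (2*(1+t)^2/5) / (1 + t^2/2) := by
    rw [div_eq_mul_inv (2*(1+t)^2/5)]; ring
  rw [heq, div_le_iff₀ hpos]
  nlinarith

lemma decay_bound (j : ℕ) (hj : j ≤ 2) {T u : ℝ} (hT : Real.sqrt 2 ≤ T) (hTu : T ≤ u) :
    (1+u)^j * Real.exp (-u^2/2) ≤ 2 * (1+T)^j * Real.exp (-T^2/2) := by
  set s := u - T with hs
  have hs0 : 0 ≤ s := by linarith
  have hT0 : (0:ℝ) ≤ T := le_trans (Real.sqrt_nonneg 2) hT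
  have h14 : (1.41:ℝ) ≤ T := by
    refine le_trans ?_ hT
    rw [show (1.41:ℝ) = Real.sqrt (1.41^2) by rw [Real.sqrt_sq (by norm_num)]]
    apply Real.sqrt_le_sqrt; norm_num
  have hu : u = T + s := by rw [hs]; ring
  have h1 : (1+u)^j ≤ (1+T)^j * (1+s)^2 := by
    have ha : (1+u) ≤ (1+T)*(1+s) := by nlinarith
    have hb : (1+u)^j ≤ ((1+T)*(1+s))^j := by
      apply pow_le_pow_left₀ (by linarith) ha
    have hc : ((1+T)*(1+s))^j = (1+T)^j * (1+s)^j := mul_pow _ _ _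
    have hd : (1+s)^j ≤ (1+s)^2 := by
      apply pow_le_pow_right₀ (by linarith) hj
    calc (1+u)^j ≤ (1+T)^j * (1+s)^j := by rw [← hc]; exact hb
    _ ≤ (1+T)^j * (1+s)^2 := by
        apply mul_le_mul_of_nonneg_left hd (by positivity)
  have h2 : (1+s)^2 ≤ Real.exp (2*s) := by
    have := Real.add_one_le_exp s
    have h2' : (1+s)^2 ≤ (Real.exp s)^2 := by nlinarith
    rw [show (2:ℝ)*s = s + s by ring, Real.exp_add]
    nlinarith [Real.exp_pos s]
  have h3 : Real.exp (-u^2/2) = Real.exp (-T^2/2) * Real.exp (-(T*s) - s^2/2) := by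
    rw [← Real.exp_add]; congr 1; rw [hu]; ring
  have h4 : Real.exp (2*s) * Real.exp (-(T*s) - s^2/2) ≤ 2 := by
    rw [← Real.exp_add]
    have harg : 2*s + (-(T*s) - s^2/2) ≤ 0.18 := by
      nlinarith [sq_nonneg (s - 0.59), mul_nonneg (by linarith : (0:ℝ) ≤ T - 1.41) hs0]
    calc Real.exp (2*s + (-(T*s) - s^2/2)) ≤ Real.exp 0.18 := Real.exp_le_exp.2 harg
    _ ≤ Real.exp (Real.log 2) := by
        apply Real.exp_le_exp.2
        have := Real.log_two_gt_d9; linarith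
    _ = 2 := Real.exp_log (by norm_num)
  calc (1+u)^j * Real.exp (-u^2/2)
      ≤ ((1+T)^j * (1+s)^2) * Real.exp (-u^2/2) := by
        apply mul_le_mul_of_nonneg_right h1 (Real.exp_pos _).le
  _ = (1+T)^j * Real.exp (-T^2/2) * ((1+s)^2 * Real.exp (-(T*s) - s^2/2)) := by
        rw [h3]; ring
  _ ≤ (1+T)^j * Real.exp (-T^2/2) * (Real.exp (2*s) * Real.exp (-(T*s) - s^2/2)) := by
        apply mul_le_mul_of_nonneg_left _ (by positivity)
        apply mul_le_mul_of_nonneg_right h2 (Real.exp_pos _).le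
  _ ≤ (1+T)^j * Real.exp (-T^2/2) * 2 := by
        apply mul_le_mul_of_nonneg_left h4 (by positivity)
  _ = 2 * (1+T)^j * Real.exp (-T^2/2) := by ring

section Qsec
set_option linter.unusedSectionVars false
variable {ι : Type*} [DecidableEq ι] (v G : ι → ℝ)

def PP (t : Finset ι) : ℝ := ∏ k ∈ t, (v k + G k)
def Q1 (t : Finset ι) : ℝ := ∑ i ∈ t, v i * ∏ j ∈ t.erase i, G j
def Q2 (t : Finset ι) : ℝ := ∑ i ∈ t, v i * Q1 v G (t.erase i)
def Q3 (t : Finset ι) : ℝ := ∑ i ∈ t, v i * Q2 v G (t.erase i)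

variable (hv : ∀ k, 0 ≤ v k) (hG : ∀ k, 0 ≤ G k)
include hv hG

lemma PP_nonneg (t : Finset ι) : 0 ≤ PP v G t :=
  Finset.prod_nonneg fun k _ => by have := hv k; have := hG k; linarith

lemma prodG_le_PP (t : Finset ι) : ∏ j ∈ t, G j ≤ PP v G t :=
  Finset.prod_le_prod (fun k _ => hG k) (fun k _ => by have := hv k; linarith)

omit hv hG in
lemma Q1_insert {i : ι} {s : Finset ι} (his : i ∉ s) :
    Q1 v G (insert i s) = v i * ∏ j ∈ s, G j + G i * Q1 v G s := by
  unfold Q1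
  rw [Finset.sum_insert his, Finset.erase_insert his]
  congr 1
  rw [Finset.mul_sum]
  apply Finset.sum_congr rfl
  intro j hj
  have hji : j ≠ i := fun h => his (h ▸ hj)
  rw [Finset.erase_insert_of_ne hji.symm ,
    Finset.prod_insert (fun h => his (Finset.mem_of_mem_erase h))]
  ring

omit hv hG in
lemma Q2_insert {i : ι} {s : Finset ι} (his : i ∉ s) :
    Q2 v G (insert i s) = 2 * v i * Q1 v G s + G i * Q2 v G s := by
  unfold Q2
  rw [Finset.sum_insert his, Finset.erase_insert his]
  have step : ∀ j ∈ s, v j * Q1 v G ((insert i s).erase j)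
      = v i * (v j * ∏ k ∈ s.erase j, G k) + G i * (v j * Q1 v G (s.erase j)) := by
    intro j hj
    have hji : j ≠ i := fun h => his (h ▸ hj)
    rw [Finset.erase_insert_of_ne hji.symm,
      Q1_insert v G (fun h => his (Finset.mem_of_mem_erase h))]
    ring
  rw [Finset.sum_congr rfl step, Finset.sum_add_distrib, ← Finset.mul_sum, ← Finset.mul_sum]
  show v i * Q1 v G s + (v i * Q1 v G s + G i * Q2 v G s) = _
  rw [show (∑ x ∈ s, v x * Q1 v G (s.erase x)) = Q2 v G s from rfl]
  ring

omit hv hG in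
lemma Q3_insert {i : ι} {s : Finset ι} (his : i ∉ s) :
    Q3 v G (insert i s) = 3 * v i * Q2 v G s + G i * Q3 v G s := by
  unfold Q3
  rw [Finset.sum_insert his, Finset.erase_insert his]
  have step : ∀ j ∈ s, v j * Q2 v G ((insert i s).erase j)
      = 2 * v i * (v j * Q1 v G (s.erase j)) + G i * (v j * Q2 v G (s.erase j)) := by
    intro j hj
    have hji : j ≠ i := fun h => his (h ▸ hj)
    rw [Finset.erase_insert_of_ne hji.symm,
      Q2_insert v G (fun h => his (Finset.mem_of_mem_erase h))]
    ring
  rw [Finset.sum_congr rfl step, Finset.sum_add_distrib, ← Finset.mul_sum, ← Finset.mul_sum]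
  show v i * Q2 v G s + (2 * v i * Q2 v G s + G i * Q3 v G s) = _
  rw [show (∑ x ∈ s, v x * Q2 v G (s.erase x)) = Q3 v G s from rfl]
  ring

lemma Q1_le (t : Finset ι) : Q1 v G t ≤ PP v G t := by
  induction t using Finset.induction_on with
  | empty => simp [Q1, PP]
  | insert i s his ih =>
    rw [Q1_insert v G his]
    unfold PP
    rw [Finset.prod_insert his]
    have h1 : v i * ∏ j ∈ s, G j ≤ v i * PP v G s :=
      mul_le_mul_of_nonneg_left (prodG_le_PP v G hv hG s) (hv i)
    have h2 : G i * Q1 v G s ≤ G i * PP v G s :=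
      mul_le_mul_of_nonneg_left ih (hG i)
    calc v i * ∏ j ∈ s, G j + G i * Q1 v G s ≤ v i * PP v G s + G i * PP v G s := by
          linarith
    _ = (v i + G i) * PP v G s := by ring
    _ = (v i + G i) * ∏ k ∈ s, (v k + G k) := rfl

lemma Q1_nonneg (t : Finset ι) : 0 ≤ Q1 v G t := by
  apply Finset.sum_nonneg
  intro i _
  exact mul_nonneg (hv i) (Finset.prod_nonneg fun j _ => hG j)

lemma Q2_nonneg (t : Finset ι) : 0 ≤ Q2 v G t :=
  Finset.sum_nonneg fun i _ => mul_nonneg (hv i) (Q1_nonneg v G hv hG _)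

lemma Q3_nonneg (t : Finset ι) : 0 ≤ Q3 v G t :=
  Finset.sum_nonneg fun i _ => mul_nonneg (hv i) (Q2_nonneg v G hv hG _)

lemma Q2_le (t : Finset ι) : Q2 v G t ≤ 2 * PP v G t := by
  induction t using Finset.induction_on with
  | empty => simp [Q2, PP]
  | insert i s his ih =>
    rw [Q2_insert v G his]
    unfold PP
    rw [Finset.prod_insert his]
    have h1 : 2 * v i * Q1 v G s ≤ 2 * v i * PP v G s := by
      apply mul_le_mul_of_nonneg_left (Q1_le v G hv hG s)
      have := hv i; linarith
    have h2 : G i * Q2 v G s ≤ G i * (2 * PP v G s) :=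
      mul_le_mul_of_nonneg_left ih (hG i)
    calc 2 * v i * Q1 v G s + G i * Q2 v G s
        ≤ 2 * v i * PP v G s + G i * (2 * PP v G s) := by linarith
    _ = 2 * ((v i + G i) * PP v G s) := by ring
    _ = 2 * ((v i + G i) * ∏ k ∈ s, (v k + G k)) := rfl

lemma Q3_le (t : Finset ι) : Q3 v G t ≤ 6 * PP v G t := by
  induction t using Finset.induction_on with
  | empty => simp [Q3, PP]
  | insert i s his ih =>
    rw [Q3_insert v G his]
    unfold PP
    rw [Finset.prod_insert his]
    have h1 : 3 * v i * Q2 v G s ≤ 3 * v i * (2 * PP v G s) := by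
      apply mul_le_mul_of_nonneg_left (Q2_le v G hv hG s)
      have := hv i; linarith
    have h2 : G i * Q3 v G s ≤ G i * (6 * PP v G s) :=
      mul_le_mul_of_nonneg_left ih (hG i)
    calc 3 * v i * Q2 v G s + G i * Q3 v G s
        ≤ 3 * v i * (2 * PP v G s) + G i * (6 * PP v G s) := by linarith
    _ = 6 * ((v i + G i) * PP v G s) := by ring
    _ = 6 * ((v i + G i) * ∏ k ∈ s, (v k + G k)) := rfl

end Qsec
section calc17
variable {p : ℕ} (r : Fin p → ℝ) (ε : ℝ) (hε : 0 < ε)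

noncomputable def Hf (m : Fin p → ℕ) (k : Fin p) (t : ℝ) : ℝ :=
  (-ε⁻¹)^(m k) * D (m k) ((r k - t)/ε)

noncomputable def Ff (m : Fin p → ℕ) (x : Fin p → ℝ) : ℝ := ∏ k, Hf r ε m k (x k)

lemma hasDerivAt_Hf (m : Fin p → ℕ) (k : Fin p) (hmk : m k ≤ 2) (t : ℝ) :
    HasDerivAt (Hf r ε m k) (Hf r ε (Function.update m k (m k + 1)) k t) t := by
  have hin : HasDerivAt (fun t : ℝ => (r k - t)/ε) (-ε⁻¹) t := by
    have h := ((hasDerivAt_id t).const_sub (r k)).div_const ε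
    refine h.congr_deriv ?_
    field_simp
  have hD := (hasDerivAt_D (m k) hmk ((r k - t)/ε)).comp t hin
  have h2 := hD.const_mul ((-ε⁻¹)^(m k))
  have : HasDerivAt (Hf r ε m k)
      ((-ε⁻¹)^(m k) * (D (m k + 1) ((r k - t)/ε) * -ε⁻¹)) t := h2
  refine this.congr_deriv ?_
  unfold Hf
  rw [Function.update_self]
  rw [pow_succ]
  ring

lemma hasFDerivAt_Ff (m : Fin p → ℕ) (hm : ∀ k, m k ≤ 2) (x : Fin p → ℝ) :
    HasFDerivAt (Ff r ε m)
      (∑ k, (∏ j ∈ Finset.univ.erase k, Hf r ε m j (x j)) •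
        ((Hf r ε (Function.update m k (m k + 1)) k (x k)) •
          (ContinuousLinearMap.proj (R := ℝ) (φ := fun _ : Fin p => ℝ) k))) x := by
  apply HasFDerivAt.finset_prod (u := Finset.univ)
    (g := fun k (x : Fin p → ℝ) => Hf r ε m k (x k))
  intro k _
  exact (hasDerivAt_Hf r ε m k (hm k) (x k)).comp_hasFDerivAt (h₂ := Hf r ε m k)
    (f := fun x : Fin p → ℝ => x k) x
    (ContinuousLinearMap.proj (R := ℝ) (φ := fun _ : Fin p => ℝ) k).hasFDerivAt

lemma fderiv_Ff_single (m : Fin p → ℕ) (hm : ∀ k, m k ≤ 2) (c : Fin p) (x : Fin p → ℝ) :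
    fderiv ℝ (Ff r ε m) x (Pi.single c 1) = Ff r ε (Function.update m c (m c + 1)) x := by
  rw [(hasFDerivAt_Ff r ε m hm x).fderiv]
  rw [ContinuousLinearMap.sum_apply]
  have hval : ∀ k, ((∏ j ∈ Finset.univ.erase k, Hf r ε m j (x j)) •
      ((Hf r ε (Function.update m k (m k + 1)) k (x k)) •
        (ContinuousLinearMap.proj (R := ℝ) (φ := fun _ : Fin p => ℝ) k))) (Pi.single c 1)
      = (∏ j ∈ Finset.univ.erase k, Hf r ε m j (x j)) *
        (Hf r ε (Function.update m k (m k + 1)) k (x k)) * (Pi.single (M := fun _ : Fin p => ℝ) c 1 k) := by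
    intro k
    simp [ContinuousLinearMap.smul_apply, ContinuousLinearMap.proj_apply, smul_eq_mul]
    ring
  rw [Finset.sum_congr rfl (fun k _ => hval k)]
  rw [Finset.sum_eq_single c]
  · rw [Pi.single_eq_same, mul_one]
    unfold Ff
    rw [← Finset.mul_prod_erase Finset.univ _ (Finset.mem_univ c)]
    have hprod : ∏ j ∈ Finset.univ.erase c, Hf r ε (Function.update m c (m c + 1)) j (x j)
        = ∏ j ∈ Finset.univ.erase c, Hf r ε m j (x j) := by
      apply Finset.prod_congr rfl
      intro j hj
      unfold Hf
      rw [Function.update_of_ne (Finset.ne_of_mem_erase hj)]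
    rw [hprod]
    ring
  · intro k _ hk
    rw [Pi.single_apply, if_neg hk]
    ring
  · intro h; exact absurd (Finset.mem_univ c) h

lemma fderiv_Ff_fun (m : Fin p → ℕ) (hm : ∀ k, m k ≤ 2) (c : Fin p) :
    (fun x => fderiv ℝ (Ff r ε m) x (Pi.single c 1)) = Ff r ε (Function.update m c (m c + 1)) :=
  funext fun x => fderiv_Ff_single r ε m hm c x

lemma contDiff_Ff (m : Fin p → ℕ) : ContDiff ℝ ∞ (Ff r ε m) := by
  apply contDiff_prod
  intro k _
  have h1 : ContDiff ℝ ∞ (fun x : Fin p → ℝ => (r k - x k)/ε) := by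
    apply ContDiff.div_const
    exact contDiff_const.sub ((ContinuousLinearMap.proj (R := ℝ) (φ := fun _ : Fin p => ℝ) k).contDiff)
  exact contDiff_const.mul ((contDiff_D (m k)).comp h1)

end calc17

lemma iteratedFDeriv_three_apply {E : Type*} [NormedAddCommGroup E] [NormedSpace ℝ E]
    {f : E → ℝ} (hf : ContDiff ℝ ∞ f) (x u v w : E) :
    iteratedFDeriv ℝ 3 f x ![u, v, w]
      = fderiv ℝ (fun y => fderiv ℝ (fun z => fderiv ℝ f z w) y v) x u := by
  have hc1 : ContDiff ℝ ∞ (fderiv ℝ f) := hf.fderiv_right (by norm_num)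
  have hc2 : ContDiff ℝ ∞ (fderiv ℝ (fderiv ℝ f)) := hc1.fderiv_right (by norm_num)
  set A2 : (E →L[ℝ] ℝ) →L[ℝ] ℝ := ContinuousLinearMap.apply ℝ ℝ w with hA2
  have e0 : (fun z => fderiv ℝ f z w) = fun z => A2 (fderiv ℝ f z) := rfl
  have e1 : ∀ z, fderiv ℝ (fun z => fderiv ℝ f z w) z
      = A2.comp (fderiv ℝ (fderiv ℝ f) z) := by
    intro z
    rw [e0]
    exact (A2.hasFDerivAt.comp z ((hc1.differentiable (by simp) z).hasFDerivAt)).fderiv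
  set B : (E →L[ℝ] (E →L[ℝ] ℝ)) →L[ℝ] ℝ :=
    A2.comp (ContinuousLinearMap.apply ℝ (E →L[ℝ] ℝ) v) with hB
  have e2 : (fun y => fderiv ℝ (fun z => fderiv ℝ f z w) y v)
      = fun y => B (fderiv ℝ (fderiv ℝ f) y) := by
    funext y
    rw [e1 y]
    rfl
  have e3 : fderiv ℝ (fun y => fderiv ℝ (fun z => fderiv ℝ f z w) y v) x
      = B.comp (fderiv ℝ (fderiv ℝ (fderiv ℝ f)) x) := by
    rw [e2]
    exact (B.hasFDerivAt.comp x ((hc2.differentiable (by simp) x).hasFDerivAt)).fderiv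
  have base : iteratedFDeriv ℝ 3 f x ![u, v, w]
      = fderiv ℝ (fderiv ℝ (fderiv ℝ f)) x u v w := by
    rw [iteratedFDeriv_succ_apply_right, iteratedFDeriv_two_apply]
    norm_num [Fin.init, Fin.last]
  rw [base, e3]
  rfl

noncomputable def LL (np : ℝ) : ℝ := Real.log (Real.exp 1 * np)
noncomputable def TV (np : ℝ) : ℝ := Real.sqrt (2 * LL np)
noncomputable def aA (np : ℝ) : ℝ := 5 * (1 + TV np)
noncomputable def bB (np : ℝ) : ℝ := 3 * Real.sqrt (LL np)

section psi
variable {np : ℝ} (hnp : 1 ≤ np)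
include hnp

lemma LL_ge_one : 1 ≤ LL np := by
  unfold LL
  rw [Real.log_mul (Real.exp_ne_zero 1) (by linarith), Real.log_exp]
  have := Real.log_nonneg hnp
  linarith

lemma sqrtL_ge_one : 1 ≤ Real.sqrt (LL np) := by
  have h := LL_ge_one hnp
  calc (1:ℝ) = Real.sqrt 1 := (Real.sqrt_one).symm
  _ ≤ Real.sqrt (LL np) := Real.sqrt_le_sqrt h

lemma TV_ge_sqrt2 : Real.sqrt 2 ≤ TV np := by
  apply Real.sqrt_le_sqrt
  have := LL_ge_one hnp
  linarith

omit hnp in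
lemma sqrt2_ge : (1.41:ℝ) ≤ Real.sqrt 2 := by
  rw [show (1.41:ℝ) = Real.sqrt (1.41^2) by rw [Real.sqrt_sq (by norm_num)]]
  apply Real.sqrt_le_sqrt; norm_num

omit hnp in
lemma sqrt2_le : Real.sqrt 2 ≤ 1.42 := by
  rw [show (1.42:ℝ) = Real.sqrt (1.42^2) by rw [Real.sqrt_sq (by norm_num)]]
  apply Real.sqrt_le_sqrt; norm_num

lemma TV_ge_one : 1 ≤ TV np := le_trans (by linarith [sqrt2_ge]) (TV_ge_sqrt2 hnp)

lemma TV_le : TV np ≤ 1.42 * Real.sqrt (LL np) := by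
  unfold TV
  rw [Real.sqrt_mul (by norm_num)]
  exact mul_le_mul_of_nonneg_right sqrt2_le (Real.sqrt_nonneg _)

lemma one_add_TV_le : 1 + TV np ≤ 2.5 * Real.sqrt (LL np) := by
  have h1 := TV_le hnp
  have h2 := sqrtL_ge_one hnp
  linarith

lemma aA_ge_ten : 10 ≤ aA np := by
  have := TV_ge_one hnp; unfold aA; linarith

lemma aA_pos : 0 < aA np := lt_of_lt_of_le (by norm_num) (aA_ge_ten hnp)

lemma bB_pos : 0 < bB np := by
  have := sqrtL_ge_one hnp; unfold bB; linarith

lemma bB_le_aA : bB np ≤ aA np := by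
  have h1 := sqrtL_ge_one hnp
  have h2 : 1.41 * Real.sqrt (LL np) ≤ TV np := by
    have : 1.41 * Real.sqrt (LL np) ≤ Real.sqrt 2 * Real.sqrt (LL np) :=
      mul_le_mul_of_nonneg_right sqrt2_ge (Real.sqrt_nonneg _)
    calc 1.41 * Real.sqrt (LL np) ≤ Real.sqrt 2 * Real.sqrt (LL np) := this
    _ = TV np := by unfold TV; rw [Real.sqrt_mul (by norm_num)]
  unfold aA bB
  nlinarith [Real.sqrt_nonneg (LL np)]

lemma psi_bound (j : ℕ) (hj : j ≤ 2) (u : ℝ) :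
    (1+|u|)^j * gg u ≤ (aA np)^(j+1) * (1 - Phi u) + (bB np)^(j+1) / np := by
  have hnp0 : (0:ℝ) < np := by linarith
  have hA10 := aA_ge_ten hnp
  have hA1 : (1:ℝ) ≤ aA np := by linarith
  have hBpos := bB_pos hnp
  have hBnn : 0 ≤ (bB np)^(j+1) / np := by positivity
  have habs : (1:ℝ) ≤ 1 + |u| := by linarith [abs_nonneg u]
  rcases le_or_gt u 0 with hu | hu
  · -- u ≤ 0
    have h1 : (1+|u|)^j * gg u ≤ (1+|u|)^2 * gg u := by
      apply mul_le_mul_of_nonneg_right _ (gg_nonneg u)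
      exact pow_le_pow_right₀ habs hj
    have h2 := gg_sq_bound u
    have h3 : (5:ℝ) ≤ (aA np)^(j+1) * (1 - Phi u) := by
      have hA : (10:ℝ) ≤ (aA np)^(j+1) :=
        le_trans hA10 (le_self_pow₀ hA1 (Nat.succ_ne_zero j))
      have hph := Phi_half hu
      calc (5:ℝ) = 10 * (1/2) := by norm_num
      _ ≤ (aA np)^(j+1) * (1 - Phi u) := by
          apply mul_le_mul hA (by linarith) (by norm_num) (by linarith)
    linarith
  rcases le_or_gt u (TV np) with huT | huT
  · -- 0 < u ≤ T
    have habsu : |u| = u := abs_of_pos hu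
    rw [habsu]
    have hphi : 0 ≤ 1 - Phi u := by linarith [Phi_le_one u]
    have h1 : (1+u)^j * gg u ≤ (1+TV np)^j * (5 * (1+TV np) * (1 - Phi u)) := by
      apply mul_le_mul
      · exact pow_le_pow_left₀ (by linarith) (by linarith) j
      · calc gg u ≤ 5 * (1+u) * (1 - Phi u) := mills hu.le
        _ ≤ 5 * (1+TV np) * (1 - Phi u) := by nlinarith
      · exact gg_nonneg u
      · have := TV_ge_one hnp
        positivity
    have h2 : (1+TV np)^j * (5 * (1+TV np) * (1 - Phi u))
        ≤ (aA np)^(j+1) * (1 - Phi u) := by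
      have hTV1 : (0:ℝ) ≤ 1 + TV np := by linarith [TV_ge_one hnp]
      have key : (1+TV np)^j * (5 * (1+TV np)) ≤ (aA np)^(j+1) := by
        have e1 : (aA np)^(j+1) = 5^(j+1) * (1+TV np)^(j+1) := by
          unfold aA; rw [mul_pow]
        have e2 : (1+TV np)^j * (5 * (1+TV np)) = 5 * (1+TV np)^(j+1) := by
          rw [pow_succ]; ring
        rw [e1, e2]
        apply mul_le_mul_of_nonneg_right _ (by positivity)
        exact le_self_pow₀ (by norm_num) (Nat.succ_ne_zero j)
      calc (1+TV np)^j * (5 * (1+TV np) * (1 - Phi u))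
          = ((1+TV np)^j * (5 * (1+TV np))) * (1 - Phi u) := by ring
      _ ≤ (aA np)^(j+1) * (1 - Phi u) := mul_le_mul_of_nonneg_right key hphi
    linarith
  · -- T < u
    have hT1 := TV_ge_one hnp
    have habsu : |u| = u := abs_of_pos (by linarith)
    rw [habsu]
    have hAterm : 0 ≤ (aA np)^(j+1) * (1 - Phi u) := by
      have := Phi_le_one u
      apply mul_nonneg (by positivity) (by linarith)
    have hdecay := decay_bound j hj (TV_ge_sqrt2 hnp) huT.le
    have hexpT : Real.exp (-(TV np)^2/2) = (Real.exp 1 * np)⁻¹ := by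
      have hLnn : (0:ℝ) ≤ 2 * LL np := by linarith [LL_ge_one hnp]
      have : (TV np)^2 = 2 * LL np := Real.sq_sqrt hLnn
      rw [this, show -(2 * LL np)/2 = -(LL np) by ring, Real.exp_neg]
      congr 1
      exact Real.exp_log (by positivity)
    -- gg u ≤ (√2π)⁻¹ * 2 * (1+T)^j * exp(-T²/2)
    have step1 : (1+u)^j * gg u
        ≤ (Real.sqrt (2*Real.pi))⁻¹ * (2 * (1+TV np)^j * (Real.exp 1 * np)⁻¹) := by
      unfold gg
      calc (1+u)^j * ((Real.sqrt (2*Real.pi))⁻¹ * Real.exp (-u^2/2))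
          = (Real.sqrt (2*Real.pi))⁻¹ * ((1+u)^j * Real.exp (-u^2/2)) := by ring
      _ ≤ (Real.sqrt (2*Real.pi))⁻¹ * (2 * (1+TV np)^j * Real.exp (-(TV np)^2/2)) := by
          apply mul_le_mul_of_nonneg_left _ (by positivity)
          exact hexpT ▸ hdecay
      _ = (Real.sqrt (2*Real.pi))⁻¹ * (2 * (1+TV np)^j * (Real.exp 1 * np)⁻¹) := by
          rw [hexpT]
    have step2 : (Real.sqrt (2*Real.pi))⁻¹ * (2 * (1+TV np)^j * (Real.exp 1 * np)⁻¹)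
        ≤ (bB np)^(j+1) / np := by
      have hsl := sqrtL_ge_one hnp
      have h1Tb : (1+TV np)^j ≤ (2.5)^j * (Real.sqrt (LL np))^(j+1) := by
        calc (1+TV np)^j ≤ (2.5 * Real.sqrt (LL np))^j := by
              apply pow_le_pow_left₀ (by linarith) (one_add_TV_le hnp) j
        _ = 2.5^j * (Real.sqrt (LL np))^j := mul_pow _ _ _
        _ ≤ 2.5^j * (Real.sqrt (LL np))^(j+1) := by
              apply mul_le_mul_of_nonneg_left _ (by positivity)
              exact pow_le_pow_right₀ hsl (by omega)
      have hbBj : (bB np)^(j+1) = 3^(j+1) * (Real.sqrt (LL np))^(j+1) := by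
        unfold bB; rw [mul_pow]
      have hnum : (2:ℝ) * 2.5^j ≤ 3^(j+1) := by
        interval_cases j <;> norm_num
      have hstp : (Real.sqrt (2*Real.pi))⁻¹ ≤ 1 := by
        rw [inv_le_one_iff₀]; right; linarith [sqrt_two_pi_ge]
      have hei : (Real.exp 1 * np)⁻¹ = (Real.exp 1)⁻¹ * np⁻¹ := by
        rw [mul_inv]
      have hexp1 : (Real.exp 1)⁻¹ ≤ 1 := by
        rw [inv_le_one_iff₀]; right; linarith [Real.add_one_le_exp 1]
      rw [hbBj, hei, div_eq_mul_inv]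
      have hnpinv : (0:ℝ) ≤ np⁻¹ := by positivity
      calc (Real.sqrt (2*Real.pi))⁻¹ * (2 * (1+TV np)^j * ((Real.exp 1)⁻¹ * np⁻¹))
          ≤ 1 * (2 * ((2.5)^j * (Real.sqrt (LL np))^(j+1)) * (1 * np⁻¹)) := by
            apply mul_le_mul hstp _ (by positivity) (by norm_num)
            apply mul_le_mul _ (by exact mul_le_mul_of_nonneg_right hexp1 hnpinv) (by positivity) (by positivity)
            exact mul_le_mul_of_nonneg_left h1Tb (by norm_num)
      _ = (2 * 2.5^j) * (Real.sqrt (LL np))^(j+1) * np⁻¹ := by ring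
      _ ≤ 3^(j+1) * (Real.sqrt (LL np))^(j+1) * np⁻¹ := by
            apply mul_le_mul_of_nonneg_right _ hnpinv
            apply mul_le_mul_of_nonneg_right hnum (by positivity)
    linarith
end psi
-- canonical multiplicity functions
def M1 {p : ℕ} (c : Fin p) : Fin p → ℕ := fun k => if k = c then 1 else 0
def M2 {p : ℕ} (b c : Fin p) : Fin p → ℕ :=
  fun k => (if k = b then 1 else 0) + (if k = c then 1 else 0)
def M3 {p : ℕ} (a b c : Fin p) : Fin p → ℕ :=
  fun k => (if k = a then 1 else 0) + (if k = b then 1 else 0) + (if k = c then 1 else 0)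

lemma TT_eq {p : ℕ} (r : Fin p → ℝ) (ε : ℝ) (a b c : Fin p) (x : Fin p → ℝ) :
    iteratedFDeriv ℝ 3 (Ff r ε (0 : Fin p → ℕ)) x
      ![Pi.single a 1, Pi.single b 1, Pi.single c 1] = Ff r ε (M3 a b c) x := by
  rw [iteratedFDeriv_three_apply (contDiff_Ff r ε 0)]
  have hm0 : ∀ k, (0 : Fin p → ℕ) k ≤ 2 := fun k => by simp
  rw [fderiv_Ff_fun r ε 0 hm0 c]
  have e1 : Function.update (0 : Fin p → ℕ) c ((0 : Fin p → ℕ) c + 1) = M1 c := by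
    funext k
    by_cases h : k = c <;> simp [Function.update_apply, M1, h]
  rw [e1]
  have hm1 : ∀ k, M1 (p := p) c k ≤ 2 := fun k => by unfold M1; split_ifs <;> omega
  rw [fderiv_Ff_fun r ε (M1 c) hm1 b]
  have e2 : Function.update (M1 c) b (M1 c b + 1) = M2 b c := by
    funext k
    simp only [Function.update_apply, M1, M2]
    split_ifs <;> omega
  rw [e2]
  have hm2 : ∀ k, M2 (p := p) b c k ≤ 2 := fun k => by unfold M2; split_ifs <;> omega
  rw [fderiv_Ff_single r ε (M2 b c) hm2 a x]
  congr 1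
  funext k
  simp only [Function.update_apply, M1, M2, M3]
  split_ifs <;> omega

lemma phi_eq {p : ℕ} (r : Fin p → ℝ) (ε : ℝ) (hε : 0 < ε) :
    phi p r ε = Ff r ε 0 := by
  funext x
  unfold phi _root_.stdGaussian
  have hset : {z : Fin p → ℝ | ∀ k, x k + ε * z k ≤ r k}
      = Set.pi Set.univ (fun k => Iic ((r k - x k)/ε)) := by
    ext z
    simp only [Set.mem_setOf_eq, Set.mem_pi, Set.mem_univ, forall_true_left, mem_Iic]
    refine forall_congr' fun k => ?_
    rw [le_div_iff₀ hε]
    constructor <;> intro h <;> nlinarith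
  rw [hset, Measure.pi_pi, ENNReal.toReal_prod]
  apply Finset.prod_congr rfl
  intro k _
  rw [gaussianReal_apply_eq_integral 0 one_ne_zero,
    ENNReal.toReal_ofReal (setIntegral_nonneg measurableSet_Iic
      (fun u _ => gaussianPDFReal_nonneg 0 1 u))]
  unfold Hf
  simp only [Pi.zero_apply]
  rw [pow_zero, one_mul]
  show _ = Phi ((r k - x k)/ε)
  unfold Phi
  rw [gg_eq]

section main
variable {p : ℕ} (r : Fin p → ℝ) (ε : ℝ) (x : Fin p → ℝ) (np : ℝ)

noncomputable def Gf (k : Fin p) : ℝ := Phi ((r k - x k)/ε)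
noncomputable def vf (k : Fin p) : ℝ := (1 - Gf r ε x k) + bB np / (aA np * np)

lemma Gf_nonneg (k : Fin p) : 0 ≤ Gf r ε x k := Phi_nonneg _

lemma vf_nonneg (hnp : 1 ≤ np) (k : Fin p) : 0 ≤ vf r ε x np k := by
  have h1 := Phi_le_one ((r k - x k)/ε)
  have h2 : 0 ≤ bB np / (aA np * np) := by
    have := bB_pos hnp; have := aA_pos hnp
    positivity
  unfold vf Gf
  linarith

lemma keyD (hnp : 1 ≤ np) (mm : ℕ) (h1 : 1 ≤ mm) (h3 : mm ≤ 3) (k : Fin p) :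
    |D mm ((r k - x k)/ε)| ≤ (aA np)^mm * vf r ε x np k := by
  obtain ⟨n, rfl⟩ : ∃ n, mm = n + 1 := ⟨mm - 1, by omega⟩
  set u := (r k - x k)/ε
  have hps := psi_bound hnp n (by omega) u
  have hD := abs_D_le (n+1) h1 h3 u
  rw [Nat.add_sub_cancel] at hD
  have hA := aA_pos hnp
  have hB := bB_pos hnp
  have hnp0 : (0:ℝ) < np := by linarith
  have hpow : (bB np)^(n+1) / np ≤ (aA np)^(n+1) * (bB np / (aA np * np)) := by
    have e1 : (aA np)^(n+1) * (bB np / (aA np * np)) = (aA np)^n * bB np / np := by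
      rw [pow_succ]
      field_simp
    rw [e1, pow_succ]
    apply div_le_div_of_nonneg_right _ hnp0.le
    apply mul_le_mul_of_nonneg_right _ hB.le
    exact pow_le_pow_left₀ hB.le (bB_le_aA hnp) n
  have expand : (aA np)^(n+1) * vf r ε x np k
      = (aA np)^(n+1) * (1 - Phi u) + (aA np)^(n+1) * (bB np / (aA np * np)) := by
    unfold vf Gf
    ring
  rw [expand]
  calc |D (n+1) u| ≤ (1+|u|)^n * gg u := hD
  _ ≤ (aA np)^(n+1) * (1 - Phi u) + (bB np)^(n+1) / np := hps
  _ ≤ _ := by linarith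

lemma absHf_eq0 (m : Fin p → ℕ) (k : Fin p) (h : m k = 0) :
    |Hf r ε m k (x k)| = Gf r ε x k := by
  unfold Hf
  rw [h, pow_zero, one_mul]
  exact abs_of_nonneg (Phi_nonneg _)

lemma absHf_le (hε : 0 < ε) (hnp : 1 ≤ np) (m : Fin p → ℕ) (k : Fin p)
    (h1 : 1 ≤ m k) (h3 : m k ≤ 3) :
    |Hf r ε m k (x k)| ≤ (ε⁻¹)^(m k) * ((aA np)^(m k) * vf r ε x np k) := by
  unfold Hf
  rw [abs_mul, abs_pow, abs_neg, abs_inv, abs_of_pos hε]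
  exact mul_le_mul_of_nonneg_left (keyD r ε x np hnp (m k) h1 h3 k) (by positivity)

lemma prodG_nonneg (s : Finset (Fin p)) : 0 ≤ ∏ k ∈ s, Gf r ε x k :=
  Finset.prod_nonneg fun k _ => Gf_nonneg r ε x k

lemma bound1 (hε : 0 < ε) (hnp : 1 ≤ np) (i : Fin p) (m : Fin p → ℕ)
    (hmi : m i = 3) (hm0 : ∀ k, k ≠ i → m k = 0) :
    |Ff r ε m x| ≤ (ε⁻¹)^3 * ((aA np)^3
      * (vf r ε x np i * ∏ k ∈ Finset.univ.erase i, Gf r ε x k)) := by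
  unfold Ff
  rw [Finset.abs_prod, ← Finset.mul_prod_erase _ _ (Finset.mem_univ i)]
  have hrest : ∏ k ∈ Finset.univ.erase i, |Hf r ε m k (x k)|
      = ∏ k ∈ Finset.univ.erase i, Gf r ε x k :=
    Finset.prod_congr rfl fun k hk =>
      absHf_eq0 r ε x m k (hm0 k (Finset.ne_of_mem_erase hk))
  rw [hrest]
  have hi := absHf_le r ε x np hε hnp m i (by omega) (by omega)
  rw [hmi] at hi
  calc |Hf r ε m i (x i)| * ∏ k ∈ Finset.univ.erase i, Gf r ε x k
      ≤ ((ε⁻¹)^3 * ((aA np)^3 * vf r ε x np i)) * ∏ k ∈ Finset.univ.erase i, Gf r ε x k :=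
        mul_le_mul_of_nonneg_right hi (prodG_nonneg r ε x _)
  _ = _ := by ring

lemma bound2 (hε : 0 < ε) (hnp : 1 ≤ np) (i j : Fin p) (hij : i ≠ j) (m : Fin p → ℕ)
    (hmi : m i = 2) (hmj : m j = 1) (hm0 : ∀ k, k ≠ i → k ≠ j → m k = 0) :
    |Ff r ε m x| ≤ (ε⁻¹)^3 * ((aA np)^3
      * (vf r ε x np i * (vf r ε x np j
        * ∏ k ∈ (Finset.univ.erase i).erase j, Gf r ε x k))) := by
  unfold Ff
  rw [Finset.abs_prod, ← Finset.mul_prod_erase _ _ (Finset.mem_univ i),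
    ← Finset.mul_prod_erase _ _ (Finset.mem_erase.mpr ⟨Ne.symm hij, Finset.mem_univ j⟩)]
  have hrest : ∏ k ∈ (Finset.univ.erase i).erase j, |Hf r ε m k (x k)|
      = ∏ k ∈ (Finset.univ.erase i).erase j, Gf r ε x k :=
    Finset.prod_congr rfl fun k hk =>
      absHf_eq0 r ε x m k (hm0 k
        (Finset.ne_of_mem_erase (Finset.mem_of_mem_erase hk)) (Finset.ne_of_mem_erase hk))
  rw [hrest]
  have hi := absHf_le r ε x np hε hnp m i (by omega) (by omega)
  rw [hmi] at hi
  have hj := absHf_le r ε x np hε hnp m j (by omega) (by omega)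
  rw [hmj] at hj
  have hvi := vf_nonneg r ε x np hnp i
  have hvj := vf_nonneg r ε x np hnp j
  have hA := aA_pos hnp
  have hprod := prodG_nonneg r ε x ((Finset.univ.erase i).erase j)
  calc |Hf r ε m i (x i)| * (|Hf r ε m j (x j)| * ∏ k ∈ (Finset.univ.erase i).erase j, Gf r ε x k)
      ≤ ((ε⁻¹)^2 * ((aA np)^2 * vf r ε x np i)) *
        (((ε⁻¹)^1 * ((aA np)^1 * vf r ε x np j)) * ∏ k ∈ (Finset.univ.erase i).erase j, Gf r ε x k) := by
        apply mul_le_mul hi _ (by positivity) (by positivity)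
        exact mul_le_mul_of_nonneg_right hj hprod
  _ = _ := by ring

lemma bound3 (hε : 0 < ε) (hnp : 1 ≤ np) (a b c : Fin p)
    (hab : a ≠ b) (hac : a ≠ c) (hbc : b ≠ c) (m : Fin p → ℕ)
    (hma : m a = 1) (hmb : m b = 1) (hmc : m c = 1)
    (hm0 : ∀ k, k ≠ a → k ≠ b → k ≠ c → m k = 0) :
    |Ff r ε m x| ≤ (ε⁻¹)^3 * ((aA np)^3
      * (vf r ε x np a * (vf r ε x np b * (vf r ε x np c
        * ∏ k ∈ ((Finset.univ.erase a).erase b).erase c, Gf r ε x k)))) := by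
  unfold Ff
  rw [Finset.abs_prod, ← Finset.mul_prod_erase _ _ (Finset.mem_univ a),
    ← Finset.mul_prod_erase _ _ (Finset.mem_erase.mpr ⟨Ne.symm hab, Finset.mem_univ b⟩),
    ← Finset.mul_prod_erase _ _ (Finset.mem_erase.mpr ⟨Ne.symm hbc,
      Finset.mem_erase.mpr ⟨Ne.symm hac, Finset.mem_univ c⟩⟩)]
  have hrest : ∏ k ∈ ((Finset.univ.erase a).erase b).erase c, |Hf r ε m k (x k)|
      = ∏ k ∈ ((Finset.univ.erase a).erase b).erase c, Gf r ε x k :=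
    Finset.prod_congr rfl fun k hk => by
      have h1 := Finset.ne_of_mem_erase hk
      have h2 := Finset.ne_of_mem_erase (Finset.mem_of_mem_erase hk)
      have h3 := Finset.ne_of_mem_erase (Finset.mem_of_mem_erase (Finset.mem_of_mem_erase hk))
      exact absHf_eq0 r ε x m k (hm0 k h3 h2 h1)
  rw [hrest]
  have ha' := absHf_le r ε x np hε hnp m a (by omega) (by omega)
  rw [hma] at ha'
  have hb' := absHf_le r ε x np hε hnp m b (by omega) (by omega)
  rw [hmb] at hb'
  have hc' := absHf_le r ε x np hε hnp m c (by omega) (by omega)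
  rw [hmc] at hc'
  have hva := vf_nonneg r ε x np hnp a
  have hvb := vf_nonneg r ε x np hnp b
  have hvc := vf_nonneg r ε x np hnp c
  have hA := aA_pos hnp
  have hprod := prodG_nonneg r ε x (((Finset.univ.erase a).erase b).erase c)
  calc |Hf r ε m a (x a)| * (|Hf r ε m b (x b)| * (|Hf r ε m c (x c)|
        * ∏ k ∈ ((Finset.univ.erase a).erase b).erase c, Gf r ε x k))
      ≤ ((ε⁻¹)^1 * ((aA np)^1 * vf r ε x np a)) * (((ε⁻¹)^1 * ((aA np)^1 * vf r ε x np b))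
        * (((ε⁻¹)^1 * ((aA np)^1 * vf r ε x np c))
        * ∏ k ∈ ((Finset.univ.erase a).erase b).erase c, Gf r ε x k)) := by
        apply mul_le_mul ha' _ (by positivity) (by positivity)
        apply mul_le_mul hb' _ (by positivity) (by positivity)
        exact mul_le_mul_of_nonneg_right hc' hprod
  _ = _ := by ring

end main
end S17

open S17

theorem stmt17 :
    ∃ C : ℝ, 0 < C ∧
      ∀ (p : ℕ), 0 < p → ∀ (r : Fin p → ℝ) (ε : ℝ), 0 < ε →
        ∀ x : Fin p → ℝ,
          ∑ a : Fin p, ∑ b : Fin p, ∑ c : Fin p,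
              |iteratedFDeriv ℝ 3 (phi p r ε) x
                ![Pi.single a 1, Pi.single b 1, Pi.single c 1]| ≤
            C * Real.log (Real.exp 1 * p) ^ ((3 : ℝ) / 2) / ε ^ 3 := by
  refine ⟨100000, by norm_num, ?_⟩
  intro p hp r ε hε x
  have hnp : (1:ℝ) ≤ (p:ℝ) := by exact_mod_cast hp
  set np := (p:ℝ) with hnpdef
  rw [phi_eq r ε hε]
  have hTT : ∀ a b c : Fin p,
      |iteratedFDeriv ℝ 3 (Ff r ε (0 : Fin p → ℕ)) x
        ![Pi.single a 1, Pi.single b 1, Pi.single c 1]| = |Ff r ε (M3 a b c) x| :=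
    fun a b c => by rw [TT_eq r ε a b c x]
  simp only [hTT]
  set v := vf r ε x np with hvdef
  set G := Gf r ε x with hGdef
  have hv : ∀ k, 0 ≤ v k := vf_nonneg r ε x np hnp
  have hG : ∀ k, 0 ≤ G k := Gf_nonneg r ε x
  set A := aA np with hAdef
  have hA : 0 < A := aA_pos hnp
  set K := (ε⁻¹)^3 * A^3 with hKdef
  have hKp : 0 ≤ K := by positivity
  set T : Fin p → Fin p → Fin p → ℝ := fun a b c => |Ff r ε (M3 a b c) x| with hTdef
  -- case bounds
  have case1 : ∀ a : Fin p, T a a a ≤ K * (v a * ∏ k ∈ Finset.univ.erase a, G k) := by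
    intro a
    have h := bound1 r ε x np hε hnp a (M3 a a a) (by simp [M3])
      (fun k hk => by simp [M3, hk])
    refine le_trans h (le_of_eq ?_)
    rw [hKdef, hvdef, hGdef, hAdef]; ring
  have case2a : ∀ a c : Fin p, a ≠ c →
      T a a c ≤ K * (v a * (v c * ∏ k ∈ (Finset.univ.erase a).erase c, G k)) := by
    intro a c hac
    have h := bound2 r ε x np hε hnp a c hac (M3 a a c)
      (by simp [M3, hac]) (by simp [M3, Ne.symm hac])
      (fun k hk1 hk2 => by simp [M3, hk1, hk2])
    refine le_trans h (le_of_eq ?_)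
    rw [hKdef, hvdef, hGdef, hAdef]; ring
  have case2b : ∀ a b : Fin p, a ≠ b →
      T a b a ≤ K * (v a * (v b * ∏ k ∈ (Finset.univ.erase a).erase b, G k)) := by
    intro a b hab
    have h := bound2 r ε x np hε hnp a b hab (M3 a b a)
      (by simp [M3, hab]) (by simp [M3, Ne.symm hab])
      (fun k hk1 hk2 => by simp [M3, hk1, hk2])
    refine le_trans h (le_of_eq ?_)
    rw [hKdef, hvdef, hGdef, hAdef]; ring
  have case2c : ∀ a b : Fin p, a ≠ b →
      T a b b ≤ K * (v a * (v b * ∏ k ∈ (Finset.univ.erase a).erase b, G k)) := by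
    intro a b hab
    have h := bound2 r ε x np hε hnp b a (Ne.symm hab) (M3 a b b)
      (by simp [M3, Ne.symm hab]) (by simp [M3, hab])
      (fun k hk1 hk2 => by simp [M3, hk2, hk1])
    refine le_trans h (le_of_eq ?_)
    rw [hKdef, hvdef, hGdef, hAdef, Finset.erase_right_comm]
    ring
  have case3 : ∀ a b c : Fin p, a ≠ b → a ≠ c → b ≠ c →
      T a b c ≤ K * (v a * (v b * (v c
        * ∏ k ∈ ((Finset.univ.erase a).erase b).erase c, G k))) := by
    intro a b c hab hac hbc
    have h := bound3 r ε x np hε hnp a b c hab hac hbc (M3 a b c)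
      (by simp [M3, hab, hac]) (by simp [M3, Ne.symm hab, hbc])
      (by simp [M3, Ne.symm hac, Ne.symm hbc])
      (fun k h1 h2 h3 => by simp [M3, h1, h2, h3])
    refine le_trans h (le_of_eq ?_)
    rw [hKdef, hvdef, hGdef, hAdef]; ring
  -- decompose and bound the triple sum
  have main : ∑ a : Fin p, ∑ b : Fin p, ∑ c : Fin p, T a b c
      ≤ K * (Q1 v G Finset.univ + 3 * Q2 v G Finset.univ + Q3 v G Finset.univ) := by
    have inner : ∀ a : Fin p, ∑ b : Fin p, ∑ c : Fin p, T a b c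
        ≤ K * (v a * ∏ k ∈ Finset.univ.erase a, G k)
          + 3 * (K * (v a * Q1 v G (Finset.univ.erase a)))
          + K * (v a * Q2 v G (Finset.univ.erase a)) := by
      intro a
      have split1 : ∑ b : Fin p, ∑ c : Fin p, T a b c
          = (∑ c : Fin p, T a a c)
            + ∑ b ∈ Finset.univ.erase a, ∑ c : Fin p, T a b c :=
        (Finset.add_sum_erase _ _ (Finset.mem_univ a)).symm
      have split2 : ∑ c : Fin p, T a a c
          = T a a a + ∑ c ∈ Finset.univ.erase a, T a a c :=
        (Finset.add_sum_erase _ _ (Finset.mem_univ a)).symm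
      have split3 : ∀ b ∈ Finset.univ.erase a, ∑ c : Fin p, T a b c
          = T a b a + (T a b b + ∑ c ∈ (Finset.univ.erase a).erase b, T a b c) := by
        intro b hb
        rw [← Finset.add_sum_erase _ _ (Finset.mem_univ a),
          ← Finset.add_sum_erase _ _ hb]
      -- bound pieces
      have hb1 : ∑ c ∈ Finset.univ.erase a, T a a c
          ≤ K * (v a * Q1 v G (Finset.univ.erase a)) := by
        calc ∑ c ∈ Finset.univ.erase a, T a a c
            ≤ ∑ c ∈ Finset.univ.erase a,
              K * (v a * (v c * ∏ k ∈ (Finset.univ.erase a).erase c, G k)) :=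
              Finset.sum_le_sum fun c hc =>
                case2a a c (Ne.symm (Finset.ne_of_mem_erase hc))
        _ = K * (v a * Q1 v G (Finset.univ.erase a)) := by
            simp only [Q1, Finset.mul_sum]
            try exact Finset.sum_congr rfl fun c _ => by ring
      have hb2 : ∀ b, b ∈ Finset.univ.erase a →
          T a b a + (T a b b + ∑ c ∈ (Finset.univ.erase a).erase b, T a b c)
          ≤ K * (v a * (v b * ∏ k ∈ (Finset.univ.erase a).erase b, G k)) * 2
            + K * (v a * (v b * Q1 v G ((Finset.univ.erase a).erase b))) := by
        intro b hb
        have hab : a ≠ b := Ne.symm (Finset.ne_of_mem_erase hb)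
        have h1 := case2b a b hab
        have h2 := case2c a b hab
        have h3 : ∑ c ∈ (Finset.univ.erase a).erase b, T a b c
            ≤ K * (v a * (v b * Q1 v G ((Finset.univ.erase a).erase b))) := by
          calc ∑ c ∈ (Finset.univ.erase a).erase b, T a b c
              ≤ ∑ c ∈ (Finset.univ.erase a).erase b,
                K * (v a * (v b * (v c
                  * ∏ k ∈ ((Finset.univ.erase a).erase b).erase c, G k))) :=
                Finset.sum_le_sum fun c hc => by
                  have hbc : b ≠ c := Ne.symm (Finset.ne_of_mem_erase hc)
                  have hac : a ≠ c := Ne.symm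
                    (Finset.ne_of_mem_erase (Finset.mem_of_mem_erase hc))
                  exact case3 a b c hab hac hbc
          _ = K * (v a * (v b * Q1 v G ((Finset.univ.erase a).erase b))) := by
              simp only [Q1, Finset.mul_sum]
              try exact Finset.sum_congr rfl fun c _ => by ring
        linarith
      calc ∑ b : Fin p, ∑ c : Fin p, T a b c
          = T a a a + ∑ c ∈ Finset.univ.erase a, T a a c
            + ∑ b ∈ Finset.univ.erase a, (T a b a
              + (T a b b + ∑ c ∈ (Finset.univ.erase a).erase b, T a b c)) := by
            rw [split1, split2, Finset.sum_congr rfl split3]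
      _ ≤ K * (v a * ∏ k ∈ Finset.univ.erase a, G k)
            + K * (v a * Q1 v G (Finset.univ.erase a))
            + ∑ b ∈ Finset.univ.erase a,
              (K * (v a * (v b * ∏ k ∈ (Finset.univ.erase a).erase b, G k)) * 2
                + K * (v a * (v b * Q1 v G ((Finset.univ.erase a).erase b)))) := by
            have := case1 a
            have hs := Finset.sum_le_sum hb2
            linarith
      _ = K * (v a * ∏ k ∈ Finset.univ.erase a, G k)
            + K * (v a * Q1 v G (Finset.univ.erase a))
            + (2 * (K * (v a * Q1 v G (Finset.univ.erase a)))
              + K * (v a * Q2 v G (Finset.univ.erase a))) := by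
            rw [Finset.sum_add_distrib]
            congr 1
            congr 1
            · simp only [Q1, Finset.mul_sum]
              try exact Finset.sum_congr rfl fun b _ => by ring
            · simp only [Q2, Q1, Finset.mul_sum]
              try exact Finset.sum_congr rfl fun b _ => Finset.sum_congr rfl fun c _ => by ring
      _ = _ := by ring
    calc ∑ a : Fin p, ∑ b : Fin p, ∑ c : Fin p, T a b c
        ≤ ∑ a : Fin p, (K * (v a * ∏ k ∈ Finset.univ.erase a, G k)
          + 3 * (K * (v a * Q1 v G (Finset.univ.erase a)))
          + K * (v a * Q2 v G (Finset.univ.erase a))) :=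
          Finset.sum_le_sum fun a _ => inner a
    _ = K * (Q1 v G Finset.univ + 3 * Q2 v G Finset.univ + Q3 v G Finset.univ) := by
        rw [Finset.sum_add_distrib, Finset.sum_add_distrib, mul_add, mul_add]
        congr 1
        · congr 1
          · simp only [Q1, Finset.mul_sum]
            try exact Finset.sum_congr rfl fun a _ => by ring
          · simp only [Q2, Q1, Finset.mul_sum]
            try exact Finset.sum_congr rfl fun a _ =>
              Finset.sum_congr rfl fun b _ => by ring
        · simp only [Q3, Q2, Q1, Finset.mul_sum]
          try exact Finset.sum_congr rfl fun a _ =>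
            Finset.sum_congr rfl fun b _ =>
              Finset.sum_congr rfl fun c _ => by ring
  -- PP bound
  have hPP : PP v G Finset.univ ≤ 3 := by
    have hcc : (0:ℝ) ≤ bB np / (A * np) := by
      have := bB_pos hnp; positivity
    have hval : ∀ k : Fin p, v k + G k = 1 + bB np / (A * np) := by
      intro k
      rw [hvdef, hGdef, hAdef]
      unfold vf Gf
      ring
    rw [PP, Finset.prod_congr rfl (fun k _ => hval k), Finset.prod_const,
      Finset.card_univ, Fintype.card_fin]
    have h1 : (1 + bB np / (A * np))^p ≤ (Real.exp (bB np / (A * np)))^p := by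
      apply pow_le_pow_left₀ (by linarith)
      linarith [Real.add_one_le_exp (bB np / (A * np))]
    have h2 : (Real.exp (bB np / (A * np)))^p = Real.exp (np * (bB np / (A * np))) := by
      rw [← Real.exp_nat_mul]
    have h3 : np * (bB np / (A * np)) = bB np / A := by
      field_simp
    have h4 : bB np / A ≤ 1 := by
      rw [div_le_one hA]; exact bB_le_aA hnp
    calc (1 + bB np / (A * np))^p ≤ Real.exp (np * (bB np / (A * np))) := by
          rw [← h2]; exact h1
    _ = Real.exp (bB np / A) := by rw [h3]
    _ ≤ Real.exp 1 := Real.exp_le_exp.2 h4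
    _ ≤ 3 := by linarith [Real.exp_one_lt_d9]
  -- finish
  have hQ1 := Q1_le v G hv hG Finset.univ
  have hQ2 := Q2_le v G hv hG Finset.univ
  have hQ3 := Q3_le v G hv hG Finset.univ
  have hPP0 : 0 ≤ PP v G Finset.univ :=
    Finset.prod_nonneg fun k _ => by have := hv k; have := hG k; linarith
  have htot : ∑ a : Fin p, ∑ b : Fin p, ∑ c : Fin p, T a b c ≤ K * 39 := by
    calc ∑ a : Fin p, ∑ b : Fin p, ∑ c : Fin p, T a b c
        ≤ K * (Q1 v G Finset.univ + 3 * Q2 v G Finset.univ + Q3 v G Finset.univ) := main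
    _ ≤ K * (13 * PP v G Finset.univ) := by
        apply mul_le_mul_of_nonneg_left _ hKp
        linarith
    _ ≤ K * 39 := by
        apply mul_le_mul_of_nonneg_left _ hKp
        linarith
  -- numeric bound on K * 39
  have hL1 := LL_ge_one hnp
  have hsL := sqrtL_ge_one hnp
  have hAle : A ≤ 12.5 * Real.sqrt (LL np) := by
    rw [hAdef]
    unfold aA
    have := one_add_TV_le hnp
    linarith
  have hA3 : A^3 ≤ 1953.125 * (Real.sqrt (LL np))^3 := by
    calc A^3 ≤ (12.5 * Real.sqrt (LL np))^3 := pow_le_pow_left₀ hA.le hAle 3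
    _ = 1953.125 * (Real.sqrt (LL np))^3 := by rw [mul_pow]; norm_num
  have hrpow : (Real.sqrt (LL np))^3 = (LL np) ^ ((3:ℝ)/2) := by
    rw [← Real.rpow_natCast (Real.sqrt (LL np)) 3, Real.sqrt_eq_rpow,
      ← Real.rpow_mul (by linarith : (0:ℝ) ≤ LL np)]
    norm_num
  have hfinal : K * 39 ≤ 100000 * (LL np) ^ ((3:ℝ)/2) / ε^3 := by
    rw [hKdef]
    have hnum : 39 * A^3 ≤ 100000 * (LL np) ^ ((3:ℝ)/2) := by
      calc 39 * A^3 ≤ 39 * (1953.125 * (Real.sqrt (LL np))^3) := by linarith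
      _ = 76171.875 * (LL np) ^ ((3:ℝ)/2) := by rw [hrpow]; ring
      _ ≤ 100000 * (LL np) ^ ((3:ℝ)/2) := by
          have : (0:ℝ) ≤ (LL np) ^ ((3:ℝ)/2) := Real.rpow_nonneg (by linarith) _
          linarith
    calc (ε⁻¹)^3 * A^3 * 39 = 39 * A^3 * (ε^3)⁻¹ := by rw [← inv_pow]; ring
    _ ≤ (100000 * (LL np) ^ ((3:ℝ)/2)) * (ε^3)⁻¹ := by
        apply mul_le_mul_of_nonneg_right hnum (by positivity)
    _ = 100000 * (LL np) ^ ((3:ℝ)/2) / ε^3 := by ring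
  have : (LL np) = Real.log (Real.exp 1 * np) := rfl
  calc ∑ a : Fin p, ∑ b : Fin p, ∑ c : Fin p, T a b c ≤ K * 39 := htot
  _ ≤ 100000 * (LL np) ^ ((3:ℝ)/2) / ε^3 := hfinal
  _ = 100000 * Real.log (Real.exp 1 * np) ^ ((3:ℝ)/2) / ε^3 := rfl
end
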